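/- arXiv:1211.4854 — 4 statements merged into one kernel-verified Lean document; each statement's English description precedes it below -/
import Mathlib

section
/- Let 1 ≤ p ≤ 2 and let X be a Banach space of type p. Then every somewhat narrow bounded linear operator T : L_p → X is narrow. -/
open MeasureTheory Set Filter Topology
open scoped ENNReal NNReal

/-- Lebesgue measure on `[0,1]`. -/
noncomputable def μ01 : Measure ℝ := volume.restrict (Set.Icc 0 1)

/-- `x` is a sign on the measurable set `A`: a.e. it takes values `±1` on `A`
and `0` outside of `A`. -/
def IsSignOn {p : ℝ≥0∞} (A : Set ℝ) (x : Lp ℝ p μ01) : Prop :=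
  ∀ᵐ t ∂μ01, (t ∈ A → x t = 1 ∨ x t = -1) ∧ (t ∉ A → x t = 0)

/-- `T : L_p → X` is narrow: for every measurable `A ⊆ [0,1]` and every `ε > 0`
there is a mean zero sign `x` on `A` with `‖T x‖ < ε`. -/
def IsNarrow {X : Type*} [NormedAddCommGroup X] [NormedSpace ℝ X] {p : ℝ≥0∞} [Fact (1 ≤ p)]
    (T : Lp ℝ p μ01 →L[ℝ] X) : Prop :=
  ∀ A : Set ℝ, A ⊆ Set.Icc 0 1 → MeasurableSet A → ∀ ε : ℝ, 0 < ε →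
    ∃ x : Lp ℝ p μ01, IsSignOn A x ∧ (∫ t, x t ∂μ01) = 0 ∧ ‖T x‖ < ε

/-- `T : L_p → X` is somewhat narrow: for every measurable `A ⊆ [0,1]` of positive
measure and every `ε > 0` there are a measurable `B ⊆ A` of positive measure and a
sign `x` on `B` with `‖T x‖ < ε ‖x‖`. -/
def IsSomewhatNarrow {X : Type*} [NormedAddCommGroup X] [NormedSpace ℝ X] {p : ℝ≥0∞}
    [Fact (1 ≤ p)] (T : Lp ℝ p μ01 →L[ℝ] X) : Prop :=
  ∀ A : Set ℝ, A ⊆ Set.Icc 0 1 → MeasurableSet A → 0 < μ01 A → ∀ ε : ℝ, 0 < ε →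
    ∃ B : Set ℝ, B ⊆ A ∧ MeasurableSet B ∧ 0 < μ01 B ∧
      ∃ x : Lp ℝ p μ01, IsSignOn B x ∧ ‖T x‖ < ε * ‖x‖

/-- `X` has type `p`: the average over all choices of signs `θ ∈ {-1,1}ⁿ` of
`‖∑ θ_i x_i‖ ^ p` is at most `K ^ p * ∑ ‖x_i‖ ^ p`. -/
def HasTypeP (p : ℝ) (X : Type*) [NormedAddCommGroup X] : Prop :=
  ∃ K : ℝ, 0 < K ∧ ∀ (n : ℕ) (x : Fin n → X),
    (∑ θ : Fin n → Bool, ‖∑ i, if θ i then x i else -x i‖ ^ p) / 2 ^ n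
      ≤ K ^ p * ∑ i, ‖x i‖ ^ p


namespace NP

instance : IsFiniteMeasure μ01 := by
  constructor
  simp [μ01]

instance : NullSingletonClass μ01 := by unfold μ01; infer_instance

lemma ne_top (S : Set ℝ) : μ01 S ≠ ∞ := measure_ne_top _ _

lemma le_one (S : Set ℝ) : μ01 S ≤ 1 := by
  calc μ01 S ≤ μ01 univ := measure_mono (subset_univ S)
  _ = 1 := by simp [μ01]

/-- the sign function determined by a positive set `P` and negative set `N`. -/
noncomputable def sgnF (P N : Set ℝ) : ℝ → ℝ :=
  fun t => P.indicator (fun _ => (1:ℝ)) t - N.indicator (fun _ => (1:ℝ)) t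

lemma sgnF_of_mem_left {P N : Set ℝ} (h : Disjoint P N) {t : ℝ} (ht : t ∈ P) :
    sgnF P N t = 1 := by
  have : t ∉ N := fun hN => h.ne_of_mem ht hN rfl
  simp [sgnF, indicator_of_mem ht, indicator_of_notMem this]

lemma sgnF_of_mem_right {P N : Set ℝ} (h : Disjoint P N) {t : ℝ} (ht : t ∈ N) :
    sgnF P N t = -1 := by
  have : t ∉ P := fun hP => h.ne_of_mem hP ht rfl
  simp [sgnF, indicator_of_mem ht, indicator_of_notMem this]

lemma sgnF_of_not_mem {P N : Set ℝ} {t : ℝ} (hP : t ∉ P) (hN : t ∉ N) :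
    sgnF P N t = 0 := by
  simp [sgnF, indicator_of_notMem hP, indicator_of_notMem hN]

lemma memℒp_sgnF (q : ℝ≥0∞) {P N : Set ℝ} (hP : MeasurableSet P) (hN : MeasurableSet N) :
    MemLp (sgnF P N) q μ01 :=
  (memLp_indicator_const q hP (1:ℝ) (Or.inr (ne_top P))).sub
    (memLp_indicator_const q hN (1:ℝ) (Or.inr (ne_top N)))

/-- The `L_p` sign with positive part `P` and negative part `N`. -/
noncomputable def sLp (q : ℝ≥0∞) {P N : Set ℝ} (hP : MeasurableSet P) (hN : MeasurableSet N) :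
    Lp ℝ q μ01 :=
  (memℒp_sgnF q hP hN).toLp _

lemma sLp_coe (q : ℝ≥0∞) {P N : Set ℝ} (hP : MeasurableSet P) (hN : MeasurableSet N) :
    ⇑(sLp q hP hN) =ᵐ[μ01] sgnF P N :=
  MemLp.coeFn_toLp _

lemma norm_sLp {q : ℝ≥0∞} (hq0 : q ≠ 0) (hqt : q ≠ ∞) {P N : Set ℝ}
    (hP : MeasurableSet P) (hN : MeasurableSet N) (hd : Disjoint P N) :
    ‖sLp q hP hN‖ = ((μ01 (P ∪ N)).toReal) ^ (1 / q.toReal) := by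
  have habs : ∀ t, ‖sgnF P N t‖ = ‖(P ∪ N).indicator (fun _ => (1:ℝ)) t‖ := by
    intro t
    by_cases hPt : t ∈ P
    · rw [sgnF_of_mem_left hd hPt, indicator_of_mem (Set.mem_union_left _ hPt)]
    · by_cases hNt : t ∈ N
      · rw [sgnF_of_mem_right hd hNt, indicator_of_mem (Set.mem_union_right _ hNt)]
        simp
      · rw [sgnF_of_not_mem hPt hNt, indicator_of_notMem (by simp [hPt, hNt])]
  rw [Lp.norm_def, eLpNorm_congr_ae (sLp_coe q hP hN),
    eLpNorm_congr_norm_ae (Eventually.of_forall habs),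
    eLpNorm_indicator_const (hP.union hN) hq0 hqt]
  simp [ENNReal.toReal_mul, ← ENNReal.toReal_rpow]

lemma integrable_sgnF {P N : Set ℝ} (hP : MeasurableSet P) (hN : MeasurableSet N) :
    Integrable (sgnF P N) μ01 :=
  ((integrable_indicator_iff hP).2 (integrableOn_const (ne_top P))).sub
    ((integrable_indicator_iff hN).2 (integrableOn_const (ne_top N)))

lemma integral_sgnF {P N : Set ℝ} (hP : MeasurableSet P) (hN : MeasurableSet N) :
    ∫ t, sgnF P N t ∂μ01 = (μ01 P).toReal - (μ01 N).toReal := by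
  unfold sgnF
  rw [integral_sub ((integrable_indicator_iff hP).2 (integrableOn_const (ne_top P)))
    ((integrable_indicator_iff hN).2 (integrableOn_const (ne_top N))),
    integral_indicator_const (1:ℝ) hP, integral_indicator_const (1:ℝ) hN]
  simp
  rfl

lemma integral_sLp (q : ℝ≥0∞) {P N : Set ℝ} (hP : MeasurableSet P) (hN : MeasurableSet N) :
    ∫ t, (sLp q hP hN) t ∂μ01 = (μ01 P).toReal - (μ01 N).toReal := by
  rw [integral_congr_ae (sLp_coe q hP hN)]
  exact integral_sgnF hP hN

lemma isSignOn_sLp (q : ℝ≥0∞) {P N A : Set ℝ} (hP : MeasurableSet P) (hN : MeasurableSet N)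
    (hd : Disjoint P N) (hU : P ∪ N = A) :
    IsSignOn A (sLp q hP hN) := by
  filter_upwards [sLp_coe q hP hN] with t ht
  rw [ht]
  constructor
  · intro hA
    rw [← hU] at hA
    rcases hA with h | h
    · exact Or.inl (sgnF_of_mem_left hd h)
    · exact Or.inr (sgnF_of_mem_right hd h)
  · intro hA
    rw [← hU] at hA
    exact sgnF_of_not_mem (fun h => hA (Or.inl h)) (fun h => hA (Or.inr h))

lemma exists_subset_toReal_eq {S : Set ℝ} (hS : MeasurableSet S) (hS1 : S ⊆ Set.Icc 0 1)
    {r : ℝ} (h0 : 0 ≤ r) (hr : r ≤ (μ01 S).toReal) :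
    ∃ D, D ⊆ S ∧ MeasurableSet D ∧ (μ01 D).toReal = r := by
  set g : ℝ → ℝ := fun t => (μ01 (S ∩ Set.Iic t)).toReal with hg
  have hlip : LipschitzWith 1 g := by
    apply LipschitzWith.of_dist_le_mul
    intro a b
    wlog hab : b ≤ a generalizing a b
    · rw [dist_comm a b, dist_comm (g a) (g b)]; exact this _ _ (le_of_not_ge hab)
    have hmono : μ01 (S ∩ Set.Iic b) ≤ μ01 (S ∩ Set.Iic a) :=
      measure_mono (inter_subset_inter_right _ (Iic_subset_Iic.2 hab))
    have hsplit : μ01 (S ∩ Set.Iic a) ≤ μ01 (S ∩ Set.Iic b) + ENNReal.ofReal (a - b) := by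
      calc μ01 (S ∩ Set.Iic a) ≤ μ01 ((S ∩ Set.Iic b) ∪ Set.Ioc b a) := by
            apply measure_mono
            intro t ⟨htS, hta⟩
            by_cases h : t ≤ b
            · exact Or.inl ⟨htS, h⟩
            · exact Or.inr ⟨lt_of_not_ge h, hta⟩
        _ ≤ μ01 (S ∩ Set.Iic b) + μ01 (Set.Ioc b a) := measure_union_le _ _
        _ ≤ μ01 (S ∩ Set.Iic b) + ENNReal.ofReal (a - b) := by
            gcongr
            calc μ01 (Set.Ioc b a) ≤ volume (Set.Ioc b a) :=
                  Measure.restrict_le_self _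
              _ = ENNReal.ofReal (a - b) := by simp [Real.volume_Ioc]
    have h1 : g b ≤ g a := ENNReal.toReal_mono (ne_top _) hmono
    have h2 : g a ≤ g b + (a - b) := by
      have := ENNReal.toReal_mono (by finiteness) hsplit
      rwa [ENNReal.toReal_add (ne_top _) ENNReal.ofReal_ne_top,
        ENNReal.toReal_ofReal (by linarith)] at this
    rw [Real.dist_eq, Real.dist_eq, abs_of_nonneg (by linarith), abs_of_nonneg (by linarith)]
    push_cast
    linarith
  have hcont : ContinuousOn g (Set.Icc 0 1) := hlip.continuous.continuousOn
  have hg0 : g 0 = 0 := by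
    have : μ01 (S ∩ Set.Iic 0) = 0 := by
      apply measure_mono_null (t := {(0:ℝ)}) _ (measure_singleton 0)
      intro t ⟨htS, ht0⟩
      have := (hS1 htS).1
      simp only [mem_singleton_iff]
      exact le_antisymm ht0 this
    simp [hg, this]
  have hg1 : g 1 = (μ01 S).toReal := by
    have : S ∩ Set.Iic 1 = S := inter_eq_self_of_subset_left (fun t ht => (hS1 ht).2)
    simp [hg, this]
  have hmem : r ∈ Set.Icc (g 0) (g 1) := by rw [hg0, hg1]; exact ⟨h0, hr⟩
  obtain ⟨t, _, hgt⟩ := intermediate_value_Icc (by norm_num : (0:ℝ) ≤ 1) hcont hmem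
  exact ⟨S ∩ Set.Iic t, inter_subset_left, hS.inter measurableSet_Iic, hgt⟩


lemma extract {X : Type*} [NormedAddCommGroup X] [NormedSpace ℝ X] {q : ℝ≥0∞}
    [Fact (1 ≤ q)] (hq0 : q ≠ 0) (hqt : q ≠ ∞)
    {T : Lp ℝ q μ01 →L[ℝ] X} (hT : IsSomewhatNarrow T)
    {A : Set ℝ} (hA1 : A ⊆ Set.Icc 0 1) (hAm : MeasurableSet A) (hApos : 0 < μ01 A)
    {δ : ℝ} (hδ : 0 < δ) :
    ∃ (P N : Set ℝ) (hP : MeasurableSet P) (hN : MeasurableSet N), Disjoint P N ∧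
      P ∪ N ⊆ A ∧ 0 < μ01 (P ∪ N) ∧
      ‖T (sLp q hP hN)‖ ≤ δ * ((μ01 (P ∪ N)).toReal) ^ (1 / q.toReal) := by
  obtain ⟨B, hBA, hBm, hBpos, x, hsign, hTx⟩ := hT A hA1 hAm hApos δ hδ
  have hxm : Measurable (⇑x) := (Lp.stronglyMeasurable x).measurable
  set P := B ∩ (⇑x) ⁻¹' {1} with hPdef
  set N := B ∩ (⇑x) ⁻¹' {-1} with hNdef
  have hP : MeasurableSet P := hBm.inter (hxm (measurableSet_singleton _))
  have hN : MeasurableSet N := hBm.inter (hxm (measurableSet_singleton _))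
  have hd : Disjoint P N := by
    rw [Set.disjoint_left]
    rintro t ⟨-, ht1⟩ ⟨-, ht2⟩
    simp only [mem_preimage, mem_singleton_iff] at ht1 ht2
    rw [ht1] at ht2; norm_num at ht2
  have hsub : P ∪ N ⊆ B := union_subset inter_subset_left inter_subset_left
  have hxeq : ⇑x =ᵐ[μ01] sgnF P N := by
    filter_upwards [hsign] with t ht
    by_cases htB : t ∈ B
    · rcases ht.1 htB with h1 | h1
      · rw [h1, sgnF_of_mem_left hd ⟨htB, by simp [h1]⟩]
      · rw [h1, sgnF_of_mem_right hd ⟨htB, by simp [h1]⟩]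
    · rw [ht.2 htB, sgnF_of_not_mem (fun h => htB h.1) (fun h => htB h.1)]
  have hBae : μ01 (B \ (P ∪ N)) = 0 := by
    have h0 : μ01 {t | ¬ (t ∈ B → t ∈ P ∪ N)} = 0 := by
      have : ∀ᵐ t ∂μ01, t ∈ B → t ∈ P ∪ N := by
        filter_upwards [hsign] with t ht htB
        rcases ht.1 htB with h1 | h1
        · exact Or.inl ⟨htB, by simp [h1]⟩
        · exact Or.inr ⟨htB, by simp [h1]⟩
      exact this
    apply measure_mono_null _ h0
    intro t ⟨htB, htPN⟩
    simp only [mem_setOf_eq, Classical.not_imp]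
    exact ⟨htB, htPN⟩
  have hμeq : μ01 (P ∪ N) = μ01 B := by
    apply le_antisymm (measure_mono hsub)
    calc μ01 B ≤ μ01 (B ∩ (P ∪ N)) + μ01 (B \ (P ∪ N)) := measure_le_inter_add_diff _ _ _
      _ = μ01 (B ∩ (P ∪ N)) := by rw [hBae, add_zero]
      _ ≤ μ01 (P ∪ N) := measure_mono inter_subset_right
  have hxLp : x = sLp q hP hN := Lp.ext (hxeq.trans (sLp_coe q hP hN).symm)
  refine ⟨P, N, hP, hN, hd, hsub.trans hBA, by rw [hμeq]; exact hBpos, ?_⟩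
  rw [← hxLp]
  apply le_of_lt
  calc ‖T x‖ < δ * ‖x‖ := hTx
    _ = δ * ((μ01 (P ∪ N)).toReal) ^ (1 / q.toReal) := by
        rw [hxLp, norm_sLp hq0 hqt hP hN hd]

section Exhaust

variable {X : Type*} [NormedAddCommGroup X] [NormedSpace ℝ X] {q : ℝ≥0∞} [Fact (1 ≤ q)]

/-- A good pair for `T, δ, η` inside `S`. -/
def Good (T : Lp ℝ q μ01 →L[ℝ] X) (δ η : ℝ) (S : Set ℝ) (PN : Set ℝ × Set ℝ) : Prop :=
  ∃ (hP : MeasurableSet PN.1) (hN : MeasurableSet PN.2), Disjoint PN.1 PN.2 ∧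
    PN.1 ∪ PN.2 ⊆ S ∧ μ01 (PN.1 ∪ PN.2) ≤ ENNReal.ofReal η ∧
    ‖T (sLp q hP hN)‖ ≤ δ * ((μ01 (PN.1 ∪ PN.2)).toReal) ^ (1 / q.toReal)

lemma sLp_empty (q : ℝ≥0∞) : sLp q MeasurableSet.empty MeasurableSet.empty = (0 : Lp ℝ q μ01) := by
  apply Lp.ext
  refine (sLp_coe q _ _).trans ?_
  refine EventuallyEq.trans ?_ (Lp.coeFn_zero ℝ q μ01).symm
  apply Eventually.of_forall
  intro t
  simp [sgnF]

lemma good_empty (T : Lp ℝ q μ01 →L[ℝ] X) {δ η : ℝ} (hδ : 0 ≤ δ) (hη : 0 ≤ η) (S : Set ℝ) :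
    Good T δ η S (∅, ∅) := by
  refine ⟨MeasurableSet.empty, MeasurableSet.empty, disjoint_bot_left, by simp, by simp, ?_⟩
  rw [sLp_empty q, map_zero, norm_zero]
  positivity

def mset (T : Lp ℝ q μ01 →L[ℝ] X) (δ η : ℝ) (S : Set ℝ) : Set ℝ :=
  {r | ∃ PN, Good T δ η S PN ∧ r = (μ01 (PN.1 ∪ PN.2)).toReal}

noncomputable def mval (T : Lp ℝ q μ01 →L[ℝ] X) (δ η : ℝ) (S : Set ℝ) : ℝ :=
  sSup (mset T δ η S)

lemma mset_nonempty (T : Lp ℝ q μ01 →L[ℝ] X) {δ η : ℝ} (hδ : 0 ≤ δ) (hη : 0 ≤ η) (S : Set ℝ) :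
    (mset T δ η S).Nonempty :=
  ⟨_, ⟨(∅, ∅), good_empty T hδ hη S, rfl⟩⟩

lemma mset_bddAbove (T : Lp ℝ q μ01 →L[ℝ] X) (δ η : ℝ) (S : Set ℝ) :
    BddAbove (mset T δ η S) := by
  refine ⟨1, fun r hr => ?_⟩
  obtain ⟨PN, -, rfl⟩ := hr
  have := le_one (PN.1 ∪ PN.2)
  calc (μ01 (PN.1 ∪ PN.2)).toReal ≤ (1 : ℝ≥0∞).toReal :=
        ENNReal.toReal_mono (by simp) this
    _ = 1 := by simp

lemma mval_mono (T : Lp ℝ q μ01 →L[ℝ] X) {δ η : ℝ} (hδ : 0 ≤ δ) (hη : 0 ≤ η)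
    {S S' : Set ℝ} (h : S ⊆ S') : mval T δ η S ≤ mval T δ η S' := by
  apply csSup_le (mset_nonempty T hδ hη S)
  rintro r ⟨PN, ⟨hP, hN, h1, h2, h3, h4⟩, rfl⟩
  exact le_csSup (mset_bddAbove T δ η S') ⟨PN, ⟨hP, hN, h1, h2.trans h, h3, h4⟩, rfl⟩

lemma exists_good_ge (T : Lp ℝ q μ01 →L[ℝ] X) {δ η : ℝ} (hδ : 0 ≤ δ) (hη : 0 ≤ η) (S : Set ℝ) :
    ∃ PN, Good T δ η S PN ∧ mval T δ η S ≤ 2 * (μ01 (PN.1 ∪ PN.2)).toReal := by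
  rcases le_or_gt (mval T δ η S) 0 with h | h
  · exact ⟨(∅, ∅), good_empty T hδ hη S, by simpa using h⟩
  · obtain ⟨r, hr, hr2⟩ := exists_lt_of_lt_csSup (mset_nonempty T hδ hη S)
      (half_lt_self h)
    obtain ⟨PN, hPN, rfl⟩ := hr
    refine ⟨PN, hPN, ?_⟩
    unfold mval
    linarith

lemma mval_pos (hq0 : q ≠ 0) (hqt : q ≠ ∞) {T : Lp ℝ q μ01 →L[ℝ] X}
    (hT : IsSomewhatNarrow T) {δ η : ℝ} (hδ : 0 < δ) (hη : 0 < η)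
    {S : Set ℝ} (hS1 : S ⊆ Set.Icc 0 1) (hSm : MeasurableSet S) (hSpos : 0 < μ01 S) :
    0 < mval T δ η S := by
  have htR : 0 < min η (μ01 S).toReal :=
    lt_min hη (ENNReal.toReal_pos hSpos.ne' (ne_top S))
  obtain ⟨D, hDS, hDm, hDr⟩ := exists_subset_toReal_eq hSm hS1 htR.le
    (min_le_right _ _)
  have hDfin : μ01 D = ENNReal.ofReal (min η (μ01 S).toReal) := by
    rw [← hDr, ENNReal.ofReal_toReal (ne_top D)]
  have hDpos : 0 < μ01 D := by
    rw [hDfin]; exact ENNReal.ofReal_pos.2 htR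
  obtain ⟨P, N, hP, hN, hd, hsub, hpos, hnorm⟩ :=
    extract hq0 hqt hT (hDS.trans hS1) hDm hDpos hδ
  have hμη : μ01 (P ∪ N) ≤ ENNReal.ofReal η := by
    calc μ01 (P ∪ N) ≤ μ01 D := measure_mono hsub
      _ ≤ ENNReal.ofReal η := by
          rw [hDfin]; exact ENNReal.ofReal_le_ofReal (min_le_left _ _)
  have hgood : Good T δ η S (P, N) :=
    ⟨hP, hN, hd, hsub.trans hDS, hμη, hnorm⟩
  calc (0:ℝ) < (μ01 (P ∪ N)).toReal := ENNReal.toReal_pos hpos.ne' (ne_top _)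
    _ ≤ mval T δ η S := le_csSup (mset_bddAbove T δ η S) ⟨(P, N), hgood, rfl⟩

end Exhaust

section ExhaustMain

variable {X : Type*} [NormedAddCommGroup X] [NormedSpace ℝ X] {q : ℝ≥0∞} [Fact (1 ≤ q)]

/-- The remainder sets in the exhaustion argument. -/
def remFun (A : Set ℝ) (pick : Set ℝ → Set ℝ × Set ℝ) : ℕ → Set ℝ
  | 0 => A
  | (k+1) => remFun A pick k \ ((pick (remFun A pick k)).1 ∪ (pick (remFun A pick k)).2)

lemma exhaust (hq0 : q ≠ 0) (hqt : q ≠ ∞) {T : Lp ℝ q μ01 →L[ℝ] X}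
    (hT : IsSomewhatNarrow T) {δ η : ℝ} (hδ : 0 < δ) (hη : 0 < η)
    {A : Set ℝ} (hA1 : A ⊆ Set.Icc 0 1) (hAm : MeasurableSet A) :
    ∃ (n : ℕ) (P N : Fin n → Set ℝ) (hP : ∀ i, MeasurableSet (P i))
      (hN : ∀ i, MeasurableSet (N i)),
      (∀ i, Disjoint (P i) (N i)) ∧ (∀ i, P i ∪ N i ⊆ A) ∧
      (∀ i j, i ≠ j → Disjoint (P i ∪ N i) (P j ∪ N j)) ∧
      (∀ i, μ01 (P i ∪ N i) ≤ ENNReal.ofReal η) ∧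
      (∀ i, ‖T (sLp q (hP i) (hN i))‖ ≤ δ * ((μ01 (P i ∪ N i)).toReal) ^ (1 / q.toReal)) ∧
      μ01 (A \ ⋃ i, (P i ∪ N i)) ≤ ENNReal.ofReal η := by
  classical
  choose pick hgoodS hmvalS using fun S => exists_good_ge T (δ := δ) (η := η) hδ.le hη.le S
  set rem : ℕ → Set ℝ := remFun A pick with hrem
  set C : ℕ → Set ℝ := fun k => (pick (rem k)).1 ∪ (pick (rem k)).2 with hC
  have hrem_succ : ∀ k, rem (k + 1) = rem k \ C k := fun k => rfl
  have hgood : ∀ k, Good T δ η (rem k) (pick (rem k)) := fun k => hgoodS (rem k)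
  have hCm : ∀ k, MeasurableSet (C k) := fun k =>
    ((hgood k).choose).union ((hgood k).choose_spec.choose)
  have hCrem : ∀ k, C k ⊆ rem k := fun k =>
    (hgood k).choose_spec.choose_spec.2.1
  have hremm : ∀ k, MeasurableSet (rem k) := by
    intro k
    induction k with
    | zero => exact hAm
    | succ k ih => rw [hrem_succ]; exact ih.diff (hCm k)
  have hremA : ∀ k, rem k ⊆ A := by
    intro k
    induction k with
    | zero => exact subset_rfl
    | succ k ih => rw [hrem_succ]; exact diff_subset.trans ih
  have hanti : Antitone rem := by
    apply antitone_nat_of_succ_le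
    intro k
    rw [hrem_succ]
    exact diff_subset
  have hCdisj_lt : ∀ i j, i < j → Disjoint (C i) (C j) := by
    intro i j hij
    have h1 : C j ⊆ rem i \ C i := (hCrem j).trans (by rw [← hrem_succ]; exact hanti hij)
    exact disjoint_sdiff_self_right.mono_right h1
  have hCdisj : ∀ i j, i ≠ j → Disjoint (C i) (C j) := by
    intro i j hij
    rcases hij.lt_or_gt with h | h
    · exact hCdisj_lt i j h
    · exact (hCdisj_lt j i h).symm
  have htsum : ∑' k, μ01 (C k) ≤ 1 := by
    rw [ENNReal.tsum_eq_iSup_sum]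
    apply iSup_le
    intro s
    rw [← measure_biUnion_finset (fun i _ j _ hij => hCdisj i j hij) (fun b _ => hCm b)]
    exact le_one _
  have hC0 : Tendsto (fun k => μ01 (C k)) atTop (𝓝 0) :=
    ENNReal.tendsto_atTop_zero_of_tsum_ne_top
      (fun h => (h ▸ htsum).not_gt ENNReal.one_lt_top)
  have hC0' : Tendsto (fun k => (μ01 (C k)).toReal) atTop (𝓝 0) := by
    have := (ENNReal.tendsto_toReal (by simp : (0:ℝ≥0∞) ≠ ∞)).comp hC0
    simpa [Function.comp_def] using this
  have hRinf : μ01 (⋂ k, rem k) = 0 := by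
    by_contra hpos
    have hpos' : 0 < μ01 (⋂ k, rem k) := pos_iff_ne_zero.2 hpos
    have hmv : 0 < mval T δ η (⋂ k, rem k) :=
      mval_pos hq0 hqt hT hδ hη
        ((iInter_subset _ 0).trans ((hremA 0).trans hA1))
        (MeasurableSet.iInter hremm) hpos'
    have hub : ∀ k, mval T δ η (⋂ k, rem k) ≤ 2 * (μ01 (C k)).toReal := by
      intro k
      exact le_trans (mval_mono T hδ.le hη.le (iInter_subset _ k)) (hmvalS (rem k))
    have : mval T δ η (⋂ k, rem k) ≤ 0 := by
      have h2 : Tendsto (fun k => 2 * (μ01 (C k)).toReal) atTop (𝓝 0) := by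
        simpa using hC0'.const_mul 2
      exact ge_of_tendsto' h2 hub
    linarith
  have htend : Tendsto (fun k => μ01 (rem k)) atTop (𝓝 0) := by
    have := tendsto_measure_iInter_atTop (μ := μ01) (s := rem)
      (fun k => (hremm k).nullMeasurableSet) hanti ⟨0, ne_top _⟩
    rwa [hRinf] at this
  have hev : ∀ᶠ n in atTop, μ01 (rem n) < ENNReal.ofReal η :=
    htend.eventually_lt_const (by positivity : (0:ℝ≥0∞) < ENNReal.ofReal η)
  obtain ⟨n, hn⟩ := hev.exists
  have hrem_eq : ∀ m, rem m = A \ ⋃ k ∈ Finset.range m, C k := by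
    intro m
    induction m with
    | zero =>
        rw [show rem 0 = A from rfl]
        simp
    | succ m ih =>
        rw [hrem_succ, ih, diff_diff, Finset.range_add_one]
        congr 1
        simp only [Finset.set_biUnion_insert]
        rw [union_comm]
  refine ⟨n, fun i => (pick (rem i)).1, fun i => (pick (rem i)).2,
    fun i => (hgood i).choose, fun i => (hgood i).choose_spec.choose, ?_, ?_, ?_, ?_, ?_, ?_⟩
  · exact fun i => (hgood i).choose_spec.choose_spec.1
  · exact fun i => ((hCrem i).trans (hremA i))
  · exact fun i j hij => hCdisj i j (fun h => hij (Fin.ext h))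
  · exact fun i => (hgood i).choose_spec.choose_spec.2.2.1
  · exact fun i => (hgood i).choose_spec.choose_spec.2.2.2
  · have hU : (⋃ i : Fin n, ((pick (rem i)).1 ∪ (pick (rem i)).2)) =
        ⋃ k ∈ Finset.range n, C k := by
      ext t
      simp only [mem_iUnion, Finset.mem_range, hC]
      constructor
      · rintro ⟨i, hi⟩; exact ⟨i.1, ⟨i.2, hi⟩⟩
      · rintro ⟨k, hk, hkt⟩; exact ⟨⟨k, hk⟩, hkt⟩
    rw [hU, ← hrem_eq n]
    exact hn.le

end ExhaustMain


section Combo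

variable {q : ℝ≥0∞}

lemma coeFn_sum' {ι : Type*} (s : Finset ι) (f : ι → Lp ℝ q μ01) :
    ⇑(∑ i ∈ s, f i) =ᵐ[μ01] fun t => ∑ i ∈ s, f i t := by
  classical
  induction s using Finset.cons_induction with
  | empty =>
      simp only [Finset.sum_empty]
      exact (Lp.coeFn_zero ℝ q μ01).trans (Eventually.of_forall (by simp))
  | cons i s hi ih =>
      rw [Finset.sum_cons]
      filter_upwards [Lp.coeFn_add (f i) (∑ j ∈ s, f j), ih] with t h1 h2
      rw [h1]
      simp only [Pi.add_apply, h2, Finset.sum_cons]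

variable {n : ℕ} {P N : Fin n → Set ℝ}

lemma disj_combo (hPN : ∀ i, Disjoint (P i) (N i))
    (hCC : ∀ i j, i ≠ j → Disjoint (P i ∪ N i) (P j ∪ N j)) (θ : Fin n → Bool) :
    Disjoint (⋃ i, (if θ i then P i else N i)) (⋃ i, (if θ i then N i else P i)) := by
  rw [Set.disjoint_iUnion_left]
  intro i
  rw [Set.disjoint_iUnion_right]
  intro j
  rcases eq_or_ne i j with rfl | hij
  · cases h : θ i
    · simp only [Bool.false_eq_true, if_false]
      exact (hPN i).symm
    · simp only [if_true]
      exact hPN i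
  · refine ((hCC i j hij).mono ?_ ?_)
    · cases h : θ i
      · simp only [Bool.false_eq_true, if_false]
        exact subset_union_right
      · simp only [if_true]
        exact subset_union_left
    · cases h : θ j
      · simp only [Bool.false_eq_true, if_false]
        exact subset_union_left
      · simp only [if_true]
        exact subset_union_right

lemma union_combo (θ : Fin n → Bool) :
    (⋃ i, (if θ i then P i else N i)) ∪ (⋃ i, (if θ i then N i else P i)) =
      ⋃ i, (P i ∪ N i) := by
  rw [← Set.iUnion_union_distrib]
  apply Set.iUnion_congr
  intro i
  cases h : θ i
  · simp only [Bool.false_eq_true, if_false]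
    exact union_comm _ _
  · simp only [if_true]

lemma sgnF_combo (hPN : ∀ i, Disjoint (P i) (N i))
    (hCC : ∀ i j, i ≠ j → Disjoint (P i ∪ N i) (P j ∪ N j)) (θ : Fin n → Bool) (t : ℝ) :
    sgnF (⋃ i, (if θ i then P i else N i)) (⋃ i, (if θ i then N i else P i)) t
      = ∑ i, (if θ i then sgnF (P i) (N i) t else -(sgnF (P i) (N i) t)) := by
  classical
  have hd := disj_combo hPN hCC θ
  by_cases hex : ∃ j, t ∈ P j ∪ N j
  · obtain ⟨j, hj⟩ := hex
    have hother : ∀ i ∈ Finset.univ, i ≠ j → (fun i => if θ i then sgnF (P i) (N i) t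
        else -(sgnF (P i) (N i) t)) i = 0 := by
      intro i _ hij
      have hti : t ∉ P i ∪ N i := fun hti => (hCC i j hij).ne_of_mem hti hj rfl
      have h0 : sgnF (P i) (N i) t = 0 :=
        sgnF_of_not_mem (fun h => hti (Or.inl h)) (fun h => hti (Or.inr h))
      simp [h0]
    rw [Finset.sum_eq_single_of_mem j (Finset.mem_univ j) hother]
    rcases hj with hjP | hjN
    · cases hθ : θ j
      · have htN : t ∈ ⋃ i, (if θ i then N i else P i) :=
          mem_iUnion.2 ⟨j, by rw [if_neg (by simp [hθ])]; exact hjP⟩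
        rw [sgnF_of_mem_right hd htN, if_neg (by simp), sgnF_of_mem_left (hPN j) hjP]
      · have htP : t ∈ ⋃ i, (if θ i then P i else N i) :=
          mem_iUnion.2 ⟨j, by rw [if_pos (by simp [hθ])]; exact hjP⟩
        rw [sgnF_of_mem_left hd htP, if_pos (by simp), sgnF_of_mem_left (hPN j) hjP]
    · cases hθ : θ j
      · have htP : t ∈ ⋃ i, (if θ i then P i else N i) :=
          mem_iUnion.2 ⟨j, by rw [if_neg (by simp [hθ])]; exact hjN⟩
        rw [sgnF_of_mem_left hd htP, if_neg (by simp), sgnF_of_mem_right (hPN j) hjN]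
        simp
      · have htN : t ∈ ⋃ i, (if θ i then N i else P i) :=
          mem_iUnion.2 ⟨j, by rw [if_pos (by simp [hθ])]; exact hjN⟩
        rw [sgnF_of_mem_right hd htN, if_pos (by simp), sgnF_of_mem_right (hPN j) hjN]
  · push_neg at hex
    have h1 : t ∉ ⋃ i, (if θ i then P i else N i) := by
      rw [mem_iUnion]
      rintro ⟨i, hi⟩
      refine hex i ?_
      revert hi
      cases h : θ i
      · simp only [Bool.false_eq_true, if_false]
        exact fun hi => Or.inr hi
      · simp only [if_true]
        exact fun hi => Or.inl hi
    have h2 : t ∉ ⋃ i, (if θ i then N i else P i) := by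
      rw [mem_iUnion]
      rintro ⟨i, hi⟩
      refine hex i ?_
      revert hi
      cases h : θ i
      · simp only [Bool.false_eq_true, if_false]
        exact fun hi => Or.inl hi
      · simp only [if_true]
        exact fun hi => Or.inr hi
    rw [sgnF_of_not_mem h1 h2]
    symm
    apply Finset.sum_eq_zero
    intro i _
    have hti := hex i
    have h0 : sgnF (P i) (N i) t = 0 :=
      sgnF_of_not_mem (fun h => hti (Or.inl h)) (fun h => hti (Or.inr h))
    simp [h0]

lemma meas_combo_left (hP : ∀ i, MeasurableSet (P i)) (hN : ∀ i, MeasurableSet (N i))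
    (θ : Fin n → Bool) : MeasurableSet (⋃ i, (if θ i then P i else N i)) := by
  apply MeasurableSet.iUnion
  intro i
  cases h : θ i
  · simp only [Bool.false_eq_true, if_false]
    exact hN i
  · simp only [if_true]
    exact hP i

lemma meas_combo_right (hP : ∀ i, MeasurableSet (P i)) (hN : ∀ i, MeasurableSet (N i))
    (θ : Fin n → Bool) : MeasurableSet (⋃ i, (if θ i then N i else P i)) := by
  apply MeasurableSet.iUnion
  intro i
  cases h : θ i
  · simp only [Bool.false_eq_true, if_false]
    exact hP i
  · simp only [if_true]
    exact hN i

lemma sLp_combo (hP : ∀ i, MeasurableSet (P i)) (hN : ∀ i, MeasurableSet (N i))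
    (hPN : ∀ i, Disjoint (P i) (N i))
    (hCC : ∀ i j, i ≠ j → Disjoint (P i ∪ N i) (P j ∪ N j)) (θ : Fin n → Bool) :
    sLp q (meas_combo_left hP hN θ) (meas_combo_right hP hN θ) =
      ∑ i, (if θ i then sLp q (hP i) (hN i) else -(sLp q (hP i) (hN i))) := by
  apply Lp.ext
  have h1 : ∀ᵐ t ∂μ01, ∀ i : Fin n,
      ((if θ i then sLp q (hP i) (hN i) else -(sLp q (hP i) (hN i))) : Lp ℝ q μ01) t =
        (if θ i then sgnF (P i) (N i) t else -(sgnF (P i) (N i) t)) := by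
    rw [ae_all_iff]
    intro i
    cases h : θ i
    · simp only [Bool.false_eq_true, if_false]
      filter_upwards [Lp.coeFn_neg (sLp q (hP i) (hN i)), sLp_coe q (hP i) (hN i)] with t ha hb
      rw [ha, Pi.neg_apply, hb]
    · simp only [if_true]
      exact sLp_coe q (hP i) (hN i)
  filter_upwards [sLp_coe q (meas_combo_left hP hN θ) (meas_combo_right hP hN θ),
    coeFn_sum' Finset.univ
      (fun i => (if θ i then sLp q (hP i) (hN i) else -(sLp q (hP i) (hN i)))), h1]
    with t hL hS hI
  rw [hL, hS, sgnF_combo hPN hCC θ t]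
  exact (Finset.sum_congr rfl (fun i _ => (hI i).symm))

lemma sLp_swap {P N : Set ℝ} (hP : MeasurableSet P) (hN : MeasurableSet N) :
    sLp q hN hP = - sLp q hP hN := by
  apply Lp.ext
  filter_upwards [sLp_coe q hN hP, Lp.coeFn_neg (sLp q hP hN), sLp_coe q hP hN] with t h1 h2 h3
  rw [h1, h2, Pi.neg_apply, h3]
  simp only [sgnF]
  ring

end Combo


lemma rademacher_sq (n : ℕ) (c : Fin n → ℝ) :
    ∑ θ : Fin n → Bool, (∑ i, (if θ i then c i else -c i))^2 = 2^n * ∑ i, (c i)^2 := by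
  induction n with
  | zero => simp
  | succ n ih =>
    rw [← Equiv.sum_comp (Fin.consEquiv (fun _ : Fin (n+1) => Bool))
      (fun θ => (∑ i, (if θ i then c i else -c i))^2), Fintype.sum_prod_type]
    have hval : ∀ (b : Bool) (θ' : Fin n → Bool),
        (∑ i, (if (Fin.consEquiv (fun _ : Fin (n+1) => Bool) (b, θ')) i then c i else -c i)) =
          (if b then c 0 else -c 0) + ∑ i : Fin n, (if θ' i then c i.succ else -c i.succ) := by
      intro b θ'
      rw [Fin.sum_univ_succ]
      simp [Fin.consEquiv]
    simp only [hval]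
    rw [Fin.sum_univ_succ (f := fun i => (c i)^2)]
    have hb : ∀ (S : ℝ), ∑ b : Bool, ((if b then c 0 else -c 0) + S)^2
        = 2 * (c 0)^2 + 2 * S^2 := by
      intro S
      rw [Fintype.sum_bool, if_pos rfl, if_neg (by simp)]
      ring
    rw [Finset.sum_comm]
    simp only [hb]
    rw [Finset.sum_add_distrib, Finset.sum_const, ← Finset.mul_sum, ih]
    simp only [Finset.card_univ, Fintype.card_fun, Fintype.card_bool, Fintype.card_fin,
      nsmul_eq_mul]
    push_cast
    ring

section Glue

variable {X : Type*} [NormedAddCommGroup X] [NormedSpace ℝ X] {q : ℝ≥0∞} [Fact (1 ≤ q)]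

lemma glue (hq0 : q ≠ 0) (hqt : q ≠ ∞)
    {T : Lp ℝ q μ01 →L[ℝ] X} (hT : IsSomewhatNarrow T)
    {K : ℝ} (hK : 0 < K)
    (htype : ∀ (m : ℕ) (x : Fin m → X),
      (∑ θ : Fin m → Bool, ‖∑ i, if θ i then x i else -x i‖ ^ q.toReal) / 2 ^ m
        ≤ K ^ q.toReal * ∑ i, ‖x i‖ ^ q.toReal)
    {δ η : ℝ} (hδ : 0 < δ) (hη : 0 < η)
    {A : Set ℝ} (hA1 : A ⊆ Set.Icc 0 1) (hAm : MeasurableSet A) :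
    ∃ (P N : Set ℝ) (hP : MeasurableSet P) (hN : MeasurableSet N), Disjoint P N ∧
      P ∪ N = A ∧
      ‖T (sLp q hP hN)‖ ^ q.toReal
          ≤ K ^ q.toReal * (δ ^ q.toReal + ‖T‖ ^ q.toReal * η) + η ∧
      ((μ01 P).toReal - (μ01 N).toReal) ^ 2
          ≤ K ^ q.toReal * (δ ^ q.toReal + ‖T‖ ^ q.toReal * η) + η := by
  classical
  set p : ℝ := q.toReal with hpdef
  have hp : 0 < p := ENNReal.toReal_pos hq0 hqt
  obtain ⟨m, P', N', hP', hN', hdisj', hsub', hCC', hsmall', hnorm', hrem⟩ :=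
    exhaust hq0 hqt hT hδ hη hA1 hAm
  set U : Set ℝ := ⋃ i, (P' i ∪ N' i) with hU
  have hUm : MeasurableSet U := MeasurableSet.iUnion (fun i => (hP' i).union (hN' i))
  have hUsub : U ⊆ A := iUnion_subset hsub'
  set R : Set ℝ := A \ U with hR
  have hRm : MeasurableSet R := hAm.diff hUm
  set P : Fin (m+1) → Set ℝ := Fin.cons R P' with hPdef
  set N : Fin (m+1) → Set ℝ := Fin.cons ∅ N' with hNdef
  have hC0 : P 0 ∪ N 0 = R := by simp [hPdef, hNdef]
  have hCsucc : ∀ i : Fin m, P i.succ ∪ N i.succ = P' i ∪ N' i := by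
    intro i; simp [hPdef, hNdef]
  have hP : ∀ i, MeasurableSet (P i) := by
    intro i
    induction i using Fin.cases with
    | zero => simpa [hPdef] using hRm
    | succ i => simpa [hPdef] using hP' i
  have hN : ∀ i, MeasurableSet (N i) := by
    intro i
    induction i using Fin.cases with
    | zero => simp [hNdef]
    | succ i => simpa [hNdef] using hN' i
  have hPN : ∀ i, Disjoint (P i) (N i) := by
    intro i
    induction i using Fin.cases with
    | zero => simp [hNdef]
    | succ i => simpa [hPdef, hNdef] using hdisj' i
  have key : ∀ j : Fin m, Disjoint R (P' j ∪ N' j) := by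
    intro j
    exact (Set.disjoint_sdiff_left).mono_right (subset_iUnion (fun i => P' i ∪ N' i) j)
  have hCC : ∀ i j, i ≠ j → Disjoint (P i ∪ N i) (P j ∪ N j) := by
    intro i j hij
    induction i using Fin.cases with
    | zero =>
        induction j using Fin.cases with
        | zero => exact absurd rfl hij
        | succ j => rw [hC0, hCsucc]; exact key j
    | succ i =>
        induction j using Fin.cases with
        | zero => rw [hC0, hCsucc]; exact (key i).symm
        | succ j =>
            rw [hCsucc, hCsucc]
            exact hCC' i j (fun h => hij (by rw [h]))
  have hcover : (⋃ i, (P i ∪ N i)) = A := by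
    ext t
    constructor
    · rw [mem_iUnion]
      rintro ⟨i, hi⟩
      induction i using Fin.cases with
      | zero => rw [hC0] at hi; exact hi.1
      | succ i => rw [hCsucc] at hi; exact hsub' i hi
    · intro htA
      rw [mem_iUnion]
      by_cases htU : t ∈ U
      · rw [hU, mem_iUnion] at htU
        obtain ⟨j, hj⟩ := htU
        exact ⟨j.succ, by rw [hCsucc]; exact hj⟩
      · exact ⟨0, by rw [hC0]; exact ⟨htA, htU⟩⟩
  have hμC : ∀ i, μ01 (P i ∪ N i) ≤ ENNReal.ofReal η := by
    intro i
    induction i using Fin.cases with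
    | zero => rw [hC0]; exact hrem
    | succ i => rw [hCsucc]; exact hsmall' i
  have hmη : ∀ i, (μ01 (P i ∪ N i)).toReal ≤ η := by
    intro i
    calc (μ01 (P i ∪ N i)).toReal ≤ (ENNReal.ofReal η).toReal :=
          ENNReal.toReal_mono ENNReal.ofReal_ne_top (hμC i)
      _ = η := ENNReal.toReal_ofReal hη.le
  have hmsum : ∑ i : Fin (m+1), (μ01 (P i ∪ N i)).toReal ≤ 1 := by
    rw [← ENNReal.toReal_sum (fun i _ => ne_top _)]
    have heq : ∑ i ∈ Finset.univ, μ01 (P i ∪ N i) = μ01 (⋃ i, (P i ∪ N i)) := by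
      rw [← measure_biUnion_finset (fun i _ j _ hij => hCC i j hij)
        (fun i _ => (hP i).union (hN i))]
      congr 1
      simp
    rw [heq, hcover]
    calc (μ01 A).toReal ≤ (1 : ℝ≥0∞).toReal := ENNReal.toReal_mono (by simp) (le_one A)
      _ = 1 := by simp
  set c : Fin (m+1) → ℝ := fun i => (μ01 (P i)).toReal - (μ01 (N i)).toReal with hc
  have hc2 : ∀ i, (c i)^2 ≤ η * (μ01 (P i ∪ N i)).toReal := by
    intro i
    have h1 : (μ01 (P i)).toReal ≤ (μ01 (P i ∪ N i)).toReal :=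
      ENNReal.toReal_mono (ne_top _) (measure_mono subset_union_left)
    have h2 : (μ01 (N i)).toReal ≤ (μ01 (P i ∪ N i)).toReal :=
      ENNReal.toReal_mono (ne_top _) (measure_mono subset_union_right)
    have h3 : (0:ℝ) ≤ (μ01 (P i)).toReal := ENNReal.toReal_nonneg
    have h4 : (0:ℝ) ≤ (μ01 (N i)).toReal := ENNReal.toReal_nonneg
    have habs : |c i| ≤ (μ01 (P i ∪ N i)).toReal := by
      rw [abs_sub_le_iff]
      constructor <;> linarith
    calc (c i)^2 = |c i| * |c i| := by rw [← abs_mul, ← sq, abs_of_nonneg (sq_nonneg _)]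
      _ ≤ η * (μ01 (P i ∪ N i)).toReal := by
          apply mul_le_mul (habs.trans (hmη i)) habs (abs_nonneg _) hη.le
  set y : Fin (m+1) → X := fun i => T (sLp q (hP i) (hN i)) with hy
  have hysum : ∑ i, ‖y i‖ ^ p ≤ δ ^ p + ‖T‖ ^ p * η := by
    rw [Fin.sum_univ_succ]
    have h0 : ‖y 0‖ ^ p ≤ ‖T‖ ^ p * η := by
      have hb : ‖y 0‖ ≤ ‖T‖ * ((μ01 (P 0 ∪ N 0)).toReal) ^ (1/p) := by
        calc ‖y 0‖ ≤ ‖T‖ * ‖sLp q (hP 0) (hN 0)‖ := T.le_opNorm _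
          _ = ‖T‖ * ((μ01 (P 0 ∪ N 0)).toReal) ^ (1/p) := by
              rw [norm_sLp hq0 hqt _ _ (hPN 0)]
      calc ‖y 0‖ ^ p ≤ (‖T‖ * ((μ01 (P 0 ∪ N 0)).toReal) ^ (1/p)) ^ p :=
            Real.rpow_le_rpow (norm_nonneg _) hb hp.le
        _ = ‖T‖ ^ p * (μ01 (P 0 ∪ N 0)).toReal := by
            rw [Real.mul_rpow (norm_nonneg _) (Real.rpow_nonneg ENNReal.toReal_nonneg _),
              ← Real.rpow_mul ENNReal.toReal_nonneg, one_div_mul_cancel hp.ne',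
              Real.rpow_one]
        _ ≤ ‖T‖ ^ p * η := by
            apply mul_le_mul_of_nonneg_left (hmη 0) (Real.rpow_nonneg (norm_nonneg _) _)
    have hs : ∑ i : Fin m, ‖y i.succ‖ ^ p ≤ δ ^ p := by
      have hterm : ∀ i : Fin m, ‖y i.succ‖ ^ p ≤ δ ^ p * (μ01 (P i.succ ∪ N i.succ)).toReal := by
        intro i
        have hb : ‖y i.succ‖ ≤ δ * ((μ01 (P i.succ ∪ N i.succ)).toReal) ^ (1/p) := by
          have := hnorm' i
          have hPs : P (Fin.succ i) = P' i := by simp [hPdef]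
          have hNs : N (Fin.succ i) = N' i := by simp [hNdef]
          calc ‖y i.succ‖ = ‖T (sLp q (hP' i) (hN' i))‖ := by congr 1
            _ ≤ δ * ((μ01 (P' i ∪ N' i)).toReal) ^ (1/p) := this
            _ = δ * ((μ01 (P i.succ ∪ N i.succ)).toReal) ^ (1/p) := by rw [hCsucc]
        calc ‖y i.succ‖ ^ p ≤ (δ * ((μ01 (P i.succ ∪ N i.succ)).toReal) ^ (1/p)) ^ p :=
              Real.rpow_le_rpow (norm_nonneg _) hb hp.le
          _ = δ ^ p * (μ01 (P i.succ ∪ N i.succ)).toReal := by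
              rw [Real.mul_rpow hδ.le (Real.rpow_nonneg ENNReal.toReal_nonneg _),
                ← Real.rpow_mul ENNReal.toReal_nonneg, one_div_mul_cancel hp.ne',
                Real.rpow_one]
      calc ∑ i : Fin m, ‖y i.succ‖ ^ p
          ≤ ∑ i : Fin m, δ ^ p * (μ01 (P i.succ ∪ N i.succ)).toReal :=
            Finset.sum_le_sum (fun i _ => hterm i)
        _ = δ ^ p * ∑ i : Fin m, (μ01 (P i.succ ∪ N i.succ)).toReal := by
            rw [Finset.mul_sum]
        _ ≤ δ ^ p * 1 := by
            apply mul_le_mul_of_nonneg_left _ (Real.rpow_nonneg hδ.le _)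
            have := hmsum
            rw [Fin.sum_univ_succ] at this
            have h0' : (0:ℝ) ≤ (μ01 (P 0 ∪ N 0)).toReal := ENNReal.toReal_nonneg
            linarith
        _ = δ ^ p := mul_one _
    linarith
  -- choose θ
  set f : (Fin (m+1) → Bool) → ℝ := fun θ => ‖∑ i, if θ i then y i else -y i‖ ^ p with hf
  set g : (Fin (m+1) → Bool) → ℝ := fun θ => (∑ i, (if θ i then c i else -c i))^2 with hgdef
  set s : ℝ := K ^ p * (δ ^ p + ‖T‖ ^ p * η) + η with hs
  have hfsum : ∑ θ, f θ ≤ 2^(m+1) * (K ^ p * (δ ^ p + ‖T‖ ^ p * η)) := by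
    have h1 := htype (m+1) y
    rw [div_le_iff₀ (by positivity)] at h1
    calc ∑ θ, f θ ≤ K ^ p * (∑ i, ‖y i‖ ^ p) * 2 ^ (m+1) := h1
      _ ≤ K ^ p * (δ ^ p + ‖T‖ ^ p * η) * 2 ^ (m+1) := by
          apply mul_le_mul_of_nonneg_right _ (by positivity)
          exact mul_le_mul_of_nonneg_left hysum (Real.rpow_nonneg hK.le _)
      _ = 2^(m+1) * (K ^ p * (δ ^ p + ‖T‖ ^ p * η)) := by ring
  have hgsum : ∑ θ, g θ ≤ 2^(m+1) * η := by
    rw [hgdef, rademacher_sq]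
    apply mul_le_mul_of_nonneg_left _ (by positivity)
    calc ∑ i, (c i)^2 ≤ ∑ i, η * (μ01 (P i ∪ N i)).toReal :=
          Finset.sum_le_sum (fun i _ => hc2 i)
      _ = η * ∑ i, (μ01 (P i ∪ N i)).toReal := by rw [Finset.mul_sum]
      _ ≤ η * 1 := mul_le_mul_of_nonneg_left hmsum hη.le
      _ = η := mul_one _
  have hθex : ∃ θ : Fin (m+1) → Bool, f θ + g θ ≤ s := by
    by_contra hcon
    push_neg at hcon
    have hlt : ∑ θ : Fin (m+1) → Bool, s < ∑ θ : Fin (m+1) → Bool, (f θ + g θ) :=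
      Finset.sum_lt_sum_of_nonempty Finset.univ_nonempty (fun θ _ => hcon θ)
    rw [Finset.sum_const, Finset.sum_add_distrib] at hlt
    have hcard : (Finset.univ : Finset (Fin (m+1) → Bool)).card = 2^(m+1) := by
      rw [Finset.card_univ, Fintype.card_fun]
      simp
    rw [hcard, nsmul_eq_mul] at hlt
    push_cast at hlt
    have : (2:ℝ)^(m+1) * s < 2^(m+1) * (K ^ p * (δ ^ p + ‖T‖ ^ p * η)) + 2^(m+1) * η := by
      calc (2:ℝ)^(m+1) * s < ∑ θ, f θ + ∑ θ, g θ := hlt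
        _ ≤ _ := add_le_add hfsum hgsum
    rw [hs] at this
    nlinarith [pow_pos (by norm_num : (0:ℝ) < 2) (m+1)]
  obtain ⟨θ, hθ⟩ := hθex
  have hfnn : 0 ≤ f θ := Real.rpow_nonneg (norm_nonneg _) _
  have hgnn : 0 ≤ g θ := sq_nonneg _
  have hfle : f θ ≤ s := by linarith
  have hgle : g θ ≤ s := by linarith
  -- assemble
  refine ⟨⋃ i, (if θ i then P i else N i), ⋃ i, (if θ i then N i else P i),
    meas_combo_left hP hN θ, meas_combo_right hP hN θ, disj_combo hPN hCC θ,
    (union_combo θ).trans hcover, ?_, ?_⟩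
  · rw [sLp_combo hP hN hPN hCC θ, map_sum]
    have : ∀ i ∈ Finset.univ, T (if θ i then sLp q (hP i) (hN i) else -(sLp q (hP i) (hN i)))
        = (if θ i then y i else -y i) := by
      intro i _
      cases h : θ i
      · simp only [Bool.false_eq_true, if_false, map_neg]
        rfl
      · simp only [if_true]
        rfl
    rw [Finset.sum_congr rfl this]
    exact hfle
  · have hint : (μ01 (⋃ i, (if θ i then P i else N i))).toReal -
        (μ01 (⋃ i, (if θ i then N i else P i))).toReal
          = ∑ i, (if θ i then c i else -c i) := by
      calc (μ01 (⋃ i, (if θ i then P i else N i))).toReal -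
            (μ01 (⋃ i, (if θ i then N i else P i))).toReal
          = ∫ t, sgnF (⋃ i, (if θ i then P i else N i))
              (⋃ i, (if θ i then N i else P i)) t ∂μ01 :=
            (integral_sgnF (meas_combo_left hP hN θ) (meas_combo_right hP hN θ)).symm
        _ = ∫ t, ∑ i, (if θ i then sgnF (P i) (N i) t else -(sgnF (P i) (N i) t)) ∂μ01 :=
            integral_congr_ae (Eventually.of_forall (fun t => sgnF_combo hPN hCC θ t))
        _ = ∑ i, ∫ t, (if θ i then sgnF (P i) (N i) t else -(sgnF (P i) (N i) t)) ∂μ01 := by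
            apply integral_finset_sum
            intro i _
            cases h : θ i
            · simp only [Bool.false_eq_true, if_false]
              exact (integrable_sgnF (hP i) (hN i)).neg
            · simp only [if_true]
              exact integrable_sgnF (hP i) (hN i)
        _ = ∑ i, (if θ i then c i else -c i) := by
            apply Finset.sum_congr rfl
            intro i _
            cases h : θ i
            · simp only [Bool.false_eq_true, if_false]
              rw [integral_neg, integral_sgnF (hP i) (hN i)]
            · simp only [if_true]
              exact integral_sgnF (hP i) (hN i)
    rw [hint]
    exact hgle

end Glue

section Correct

variable {X : Type*} [NormedAddCommGroup X] [NormedSpace ℝ X] {q : ℝ≥0∞} [Fact (1 ≤ q)]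

lemma correct (hq0 : q ≠ 0) (hqt : q ≠ ∞) (T : Lp ℝ q μ01 →L[ℝ] X)
    {P N A : Set ℝ} (hP : MeasurableSet P) (hN : MeasurableSet N) (hd : Disjoint P N)
    (hU : P ∪ N = A) (hA1 : A ⊆ Set.Icc 0 1)
    (hc : 0 ≤ (μ01 P).toReal - (μ01 N).toReal) :
    ∃ x : Lp ℝ q μ01, IsSignOn A x ∧ (∫ t, x t ∂μ01) = 0 ∧
      ‖T x‖ ≤ ‖T (sLp q hP hN)‖ +
        2 * ‖T‖ * (((μ01 P).toReal - (μ01 N).toReal)/2) ^ (1/q.toReal) := by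
  set c : ℝ := (μ01 P).toReal - (μ01 N).toReal with hcdef
  have hPA : P ⊆ A := hU ▸ subset_union_left
  have hNnn : (0:ℝ) ≤ (μ01 N).toReal := ENNReal.toReal_nonneg
  have hc2 : c/2 ≤ (μ01 P).toReal := by rw [hcdef]; linarith
  obtain ⟨D, hDP, hDm, hDr⟩ := exists_subset_toReal_eq hP (hPA.trans hA1)
    (by positivity : (0:ℝ) ≤ c/2) hc2
  set P' : Set ℝ := P \ D with hP'def
  set N' : Set ℝ := N ∪ D with hN'def
  have hP'm : MeasurableSet P' := hP.diff hDm
  have hN'm : MeasurableSet N' := hN.union hDm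
  have hd' : Disjoint P' N' := by
    rw [hN'def, Set.disjoint_union_right]
    exact ⟨hd.mono_left diff_subset, Set.disjoint_sdiff_left⟩
  have hU' : P' ∪ N' = A := by
    rw [hP'def, hN'def, union_comm N D, ← union_assoc, Set.diff_union_of_subset hDP, hU]
  have hμD : μ01 D = ENNReal.ofReal (c/2) := by
    rw [← hDr, ENNReal.ofReal_toReal (ne_top D)]
  have hμP' : (μ01 P').toReal = (μ01 P).toReal - c/2 := by
    rw [hP'def, measure_diff hDP hDm.nullMeasurableSet (ne_top D),
      ENNReal.toReal_sub_of_le (measure_mono hDP) (ne_top P), hDr]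
  have hμN' : (μ01 N').toReal = (μ01 N).toReal + c/2 := by
    rw [hN'def, measure_union (hd.symm.mono_right hDP) hDm,
      ENNReal.toReal_add (ne_top N) (ne_top D), hDr]
  have hzero : (μ01 P').toReal - (μ01 N').toReal = 0 := by
    rw [hμP', hμN', hcdef]; ring
  have hkey : sLp q hP'm hN'm
      = sLp q hP hN - (2:ℝ) • (indicatorConstLp q hDm (ne_top D) (1:ℝ)) := by
    apply Lp.ext
    filter_upwards [sLp_coe q hP'm hN'm,
      Lp.coeFn_sub (sLp q hP hN) ((2:ℝ) • (indicatorConstLp q hDm (ne_top D) (1:ℝ))),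
      Lp.coeFn_smul (2:ℝ) (indicatorConstLp q hDm (ne_top D) (1:ℝ)),
      sLp_coe q hP hN, indicatorConstLp_coeFn (μ := μ01) (p := q) (hs := hDm)
        (hμs := ne_top D) (c := (1:ℝ))] with t h1 h2 h3 h4 h5
    rw [h1, h2, Pi.sub_apply, h3, Pi.smul_apply, h4, h5, smul_eq_mul]
    by_cases htD : t ∈ D
    · have htP : t ∈ P := hDP htD
      have htN : t ∉ N := fun h => hd.ne_of_mem htP h rfl
      have htP' : t ∉ P' := fun h => h.2 htD
      have htN' : t ∈ N' := Or.inr htD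
      rw [sgnF_of_mem_right hd' htN']
      rw [show sgnF P N t = 1 from sgnF_of_mem_left hd htP]
      rw [indicator_of_mem htD]
      ring
    · have hPP' : t ∈ P' ↔ t ∈ P := by
        constructor
        · exact fun h => h.1
        · exact fun h => ⟨h, htD⟩
      have hNN' : t ∈ N' ↔ t ∈ N := by
        constructor
        · rintro (h | h)
          · exact h
          · exact absurd h htD
        · exact fun h => Or.inl h
      rw [indicator_of_notMem htD, mul_zero, sub_zero]
      unfold sgnF
      by_cases htP : t ∈ P
      · have h1' : t ∈ P' := hPP'.2 htP
        have h2' : t ∉ N := fun h => hd.ne_of_mem htP h rfl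
        have h3' : t ∉ N' := fun h => h2' (hNN'.1 h)
        rw [indicator_of_mem htP, indicator_of_mem h1', indicator_of_notMem h2',
          indicator_of_notMem h3']
      · have h1' : t ∉ P' := fun h => htP (hPP'.1 h)
        rw [indicator_of_notMem htP, indicator_of_notMem h1']
        by_cases htN : t ∈ N
        · rw [indicator_of_mem htN, indicator_of_mem (hNN'.2 htN)]
        · rw [indicator_of_notMem htN, indicator_of_notMem (fun h => htN (hNN'.1 h))]
  refine ⟨sLp q hP'm hN'm, isSignOn_sLp q hP'm hN'm hd' hU', ?_, ?_⟩
  · rw [integral_sLp]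
    linarith [hzero]
  · rw [hkey, map_sub]
    calc ‖T (sLp q hP hN) - T ((2:ℝ) • indicatorConstLp q hDm (ne_top D) (1:ℝ))‖
        ≤ ‖T (sLp q hP hN)‖ + ‖T ((2:ℝ) • indicatorConstLp q hDm (ne_top D) (1:ℝ))‖ :=
          norm_sub_le _ _
      _ ≤ ‖T (sLp q hP hN)‖ + 2 * ‖T‖ * (c/2) ^ (1/q.toReal) := by
          have h1 : ‖indicatorConstLp q hDm (ne_top D) (1:ℝ)‖ = (c/2)^(1/q.toReal) := by
            rw [norm_indicatorConstLp hq0 hqt, measureReal_def, hDr, norm_one, one_mul]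
          have hv : ‖T ((2:ℝ) • indicatorConstLp q hDm (ne_top D) (1:ℝ))‖
              ≤ 2 * ‖T‖ * (c/2) ^ (1/q.toReal) := by
            rw [_root_.map_smul, norm_smul]
            have h2 := T.le_opNorm (indicatorConstLp q hDm (ne_top D) (1:ℝ))
            rw [h1] at h2
            have h3 : ‖(2:ℝ)‖ = 2 := by norm_num
            rw [h3]
            linarith
          exact add_le_add le_rfl hv

end Correct

section Numeric

lemma rpow_le_of_rpow_le {p a s : ℝ} (hp : 0 < p) (ha : 0 ≤ a) (h : a ^ p ≤ s) :
    a ≤ s ^ (1/p) := by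
  have : a = (a ^ p) ^ (1/p) := by
    rw [← Real.rpow_mul ha, mul_one_div_cancel hp.ne', Real.rpow_one]
  rw [this]
  exact Real.rpow_le_rpow (Real.rpow_nonneg ha _) h (by positivity)

lemma budget {p : ℝ} (hp : 0 < p) {K M st : ℝ} (hK : 0 < K) (hM0 : 0 ≤ M) (hst : 0 < st) :
    ∃ δ η : ℝ, 0 < δ ∧ 0 < η ∧ K ^ p * (δ ^ p + M ^ p * η) + η ≤ st := by
  set Kp : ℝ := K ^ p with hKpdef
  have hKp : 0 < Kp := Real.rpow_pos_of_pos hK p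
  set Mp : ℝ := M ^ p with hMpdef
  have hMp : (0:ℝ) ≤ Mp := Real.rpow_nonneg hM0 p
  have hd0 : (0:ℝ) < Kp * Mp + 1 := by nlinarith
  refine ⟨(st / (3 * Kp)) ^ (1/p), st / (3 * (Kp * Mp + 1)),
    Real.rpow_pos_of_pos (div_pos hst (by nlinarith)) _,
    div_pos hst (by nlinarith), ?_⟩
  have hq3 : (0:ℝ) < st / (3 * Kp) := div_pos hst (by nlinarith)
  have hδp : ((st / (3 * Kp)) ^ (1/p)) ^ p = st / (3 * Kp) := by
    rw [← Real.rpow_mul hq3.le, one_div_mul_cancel hp.ne', Real.rpow_one]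
  rw [hδp]
  have e1 : Kp * (st / (3 * Kp)) = st/3 := by
    field_simp <;> ring
  have e2 : Kp * (Mp * (st / (3 * (Kp * Mp + 1)))) ≤ st/3 := by
    rw [show Kp * (Mp * (st / (3*(Kp*Mp+1)))) = (Kp*Mp) * st / (3*(Kp*Mp+1)) by ring,
      div_le_div_iff₀ (by nlinarith) (by norm_num)]
    nlinarith [mul_nonneg (mul_nonneg hKp.le hMp) hst.le]
  have e3 : st / (3 * (Kp * Mp + 1)) ≤ st/3 := by
    rw [div_le_div_iff₀ (by nlinarith) (by norm_num)]
    nlinarith [mul_nonneg hst.le (mul_nonneg hKp.le hMp)]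
  calc Kp * (st / (3 * Kp) + Mp * (st / (3 * (Kp * Mp + 1)))) + st / (3 * (Kp * Mp + 1))
      = Kp * (st / (3 * Kp)) + Kp * (Mp * (st / (3 * (Kp * Mp + 1))))
          + st / (3 * (Kp * Mp + 1)) := by ring
    _ ≤ st/3 + st/3 + st/3 := by rw [e1]; exact add_le_add (add_le_add le_rfl e2) e3
    _ = st := by ring

lemma numeric {p ε M : ℝ} (hp : 0 < p) (hε : 0 < ε) (hM0 : 0 ≤ M) :
    0 < min 1 ((ε / (1 + 2*M)) ^ (2*p) / 2) ∧
    (min 1 ((ε / (1 + 2*M)) ^ (2*p) / 2)) ^ (1/p)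
      + 2 * M * (Real.sqrt (min 1 ((ε / (1 + 2*M)) ^ (2*p) / 2)) / 2) ^ (1/p) < ε := by
  set ε' : ℝ := ε / (1 + 2*M) with hε'
  have hε'pos : 0 < ε' := div_pos hε (by linarith)
  set st : ℝ := min 1 (ε' ^ (2*p) / 2) with hst
  have hstpos : 0 < st := lt_min one_pos (half_pos (Real.rpow_pos_of_pos hε'pos _))
  have hst1 : st ≤ 1 := min_le_left _ _
  refine ⟨hstpos, ?_⟩
  have h12p : (0:ℝ) < 1/(2*p) := by positivity
  have hx1 : st ^ (1/p) ≤ st ^ (1/(2*p)) := by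
    apply Real.rpow_le_rpow_of_exponent_ge hstpos hst1
    rw [div_le_div_iff₀ (by linarith) hp]
    nlinarith
  have hx2 : (Real.sqrt st / 2) ^ (1/p) ≤ st ^ (1/(2*p)) := by
    have hs2 : Real.sqrt st / 2 ≤ Real.sqrt st := by
      have := Real.sqrt_nonneg st
      linarith
    calc (Real.sqrt st / 2) ^ (1/p) ≤ (Real.sqrt st) ^ (1/p) :=
          Real.rpow_le_rpow (by positivity) hs2 (by positivity)
      _ = st ^ (1/(2*p)) := by
          rw [Real.sqrt_eq_rpow, ← Real.rpow_mul hstpos.le]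
          congr 1
          field_simp <;> ring
  have hlt : st ^ (1/(2*p)) < ε' := by
    have hstlt : st < ε' ^ (2*p) := lt_of_le_of_lt (min_le_right _ _)
      (half_lt_self (Real.rpow_pos_of_pos hε'pos _))
    calc st ^ (1/(2*p)) < (ε' ^ (2*p)) ^ (1/(2*p)) :=
          Real.rpow_lt_rpow hstpos.le hstlt h12p
      _ = ε' := by
          rw [← Real.rpow_mul hε'pos.le, mul_one_div_cancel (by positivity : (2:ℝ)*p ≠ 0),
            Real.rpow_one]
  calc st ^ (1/p) + 2 * M * (Real.sqrt st / 2) ^ (1/p)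
      ≤ st ^ (1/(2*p)) + 2 * M * st ^ (1/(2*p)) := by
        refine add_le_add hx1 (mul_le_mul_of_nonneg_left hx2 (by linarith))
    _ = (1 + 2*M) * st ^ (1/(2*p)) := by ring
    _ < (1 + 2*M) * ε' := mul_lt_mul_of_pos_left hlt (by linarith)
    _ = ε := by
        rw [hε']
        field_simp

lemma le_sqrt_of_sq_le {c st : ℝ} (hc : 0 ≤ c) (h : c^2 ≤ st) : c ≤ Real.sqrt st := by
  calc c = Real.sqrt (c^2) := (Real.sqrt_sq hc).symm
    _ ≤ Real.sqrt st := Real.sqrt_le_sqrt h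

end Numeric

end NP
/-- If `1 ≤ p ≤ 2` and `X` is a Banach space of type `p`, then every somewhat narrow
bounded linear operator `T : L_p[0,1] → X` is narrow. -/
theorem somewhat_narrow_is_narrow_of_type {X : Type*} [NormedAddCommGroup X]
    [NormedSpace ℝ X] [CompleteSpace X]
    (p : ℝ) (hp1 : 1 ≤ p) (hp2 : p ≤ 2) [Fact (1 ≤ ENNReal.ofReal p)]
    (hX : HasTypeP p X)
    (T : Lp ℝ (ENNReal.ofReal p) μ01 →L[ℝ] X)
    (hT : IsSomewhatNarrow T) : IsNarrow T := by
  classical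
  intro A hA1 hAm ε hε
  set q : ℝ≥0∞ := ENNReal.ofReal p with hqdef
  have hp : 0 < p := by linarith
  have hq0 : q ≠ 0 := by
    rw [hqdef, Ne, ENNReal.ofReal_eq_zero]
    linarith
  have hqt : q ≠ ∞ := ENNReal.ofReal_ne_top
  have hqp : q.toReal = p := ENNReal.toReal_ofReal hp.le
  by_cases hA0 : μ01 A = 0
  · refine ⟨0, ?_, ?_, ?_⟩
    · have hAe : ∀ᵐ t ∂μ01, t ∉ A := by
        have hset : {t : ℝ | ¬ t ∉ A} = A := by ext t; simp
        rw [ae_iff, hset]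
        exact hA0
      filter_upwards [Lp.coeFn_zero ℝ q μ01, hAe] with t h1 h2
      exact ⟨fun ht => absurd ht h2, fun _ => by rw [h1]; rfl⟩
    · rw [integral_congr_ae (Lp.coeFn_zero ℝ q μ01)]
      simp
    · rw [map_zero, norm_zero]
      exact hε
  · obtain ⟨K, hK, htypeP⟩ := hX
    have htype : ∀ (m : ℕ) (x : Fin m → X),
        (∑ θ : Fin m → Bool, ‖∑ i, if θ i then x i else -x i‖ ^ q.toReal) / 2 ^ m
          ≤ K ^ q.toReal * ∑ i, ‖x i‖ ^ q.toReal := by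
      intro m x
      simp only [hqp]
      exact htypeP m x
    have hM0 : (0:ℝ) ≤ ‖T‖ := norm_nonneg _
    obtain ⟨hstpos, hnum⟩ := NP.numeric (M := ‖T‖) hp hε hM0
    set st : ℝ := min 1 ((ε / (1 + 2*‖T‖)) ^ (2*p) / 2) with hst
    obtain ⟨δ, η, hδpos, hηpos, hbudget⟩ := NP.budget hp hK hM0 hstpos
    obtain ⟨P, N, hPm, hNm, hdPN, hUPN, hn1, hn2⟩ :=
      NP.glue hq0 hqt hT hK htype hδpos hηpos hA1 hAm
    rw [hqp] at hn1 hn2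
    have hb1 : ‖T (NP.sLp q hPm hNm)‖ ^ p ≤ st := le_trans hn1 hbudget
    have hb2 : ((μ01 P).toReal - (μ01 N).toReal)^2 ≤ st := le_trans hn2 hbudget
    rcases le_or_gt 0 ((μ01 P).toReal - (μ01 N).toReal) with hcs | hcs
    · obtain ⟨x, hxsign, hxint, hxnorm⟩ :=
        NP.correct hq0 hqt T hPm hNm hdPN hUPN hA1 hcs
      refine ⟨x, hxsign, hxint, lt_of_le_of_lt ?_ hnum⟩
      have hTb : ‖T (NP.sLp q hPm hNm)‖ ≤ st ^ (1/p) :=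
        NP.rpow_le_of_rpow_le hp (norm_nonneg _) hb1
      have hcb : (μ01 P).toReal - (μ01 N).toReal ≤ Real.sqrt st :=
        NP.le_sqrt_of_sq_le hcs hb2
      have hcb' : (((μ01 P).toReal - (μ01 N).toReal)/2) ^ (1/(q.toReal))
          ≤ (Real.sqrt st / 2) ^ (1/p) := by
        rw [hqp]
        exact Real.rpow_le_rpow (by linarith) (by linarith) (by positivity)
      calc ‖T x‖ ≤ ‖T (NP.sLp q hPm hNm)‖ +
            2 * ‖T‖ * (((μ01 P).toReal - (μ01 N).toReal)/2) ^ (1/q.toReal) := hxnorm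
        _ ≤ st ^ (1/p) + 2 * ‖T‖ * (Real.sqrt st / 2) ^ (1/p) :=
            add_le_add hTb (mul_le_mul_of_nonneg_left hcb' (by linarith))
    · obtain ⟨x, hxsign, hxint, hxnorm⟩ :=
        NP.correct hq0 hqt T hNm hPm hdPN.symm (by rw [union_comm]; exact hUPN) hA1
          (by linarith)
      refine ⟨x, hxsign, hxint, lt_of_le_of_lt ?_ hnum⟩
      have hswap : ‖T (NP.sLp q hNm hPm)‖ = ‖T (NP.sLp q hPm hNm)‖ := by
        rw [NP.sLp_swap, map_neg, norm_neg]
      have hTb : ‖T (NP.sLp q hNm hPm)‖ ≤ st ^ (1/p) := by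
        rw [hswap]
        exact NP.rpow_le_of_rpow_le hp (norm_nonneg _) hb1
      have hb2' : ((μ01 N).toReal - (μ01 P).toReal)^2 ≤ st := by
        rw [show ((μ01 N).toReal - (μ01 P).toReal)^2
          = (((μ01 P).toReal - (μ01 N).toReal))^2 by ring]
        exact hb2
      have hcb : (μ01 N).toReal - (μ01 P).toReal ≤ Real.sqrt st :=
        NP.le_sqrt_of_sq_le (by linarith) hb2'
      have hcb' : (((μ01 N).toReal - (μ01 P).toReal)/2) ^ (1/(q.toReal))
          ≤ (Real.sqrt st / 2) ^ (1/p) := by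
        rw [hqp]
        exact Real.rpow_le_rpow (by linarith) (by linarith) (by positivity)
      calc ‖T x‖ ≤ ‖T (NP.sLp q hNm hPm)‖ +
            2 * ‖T‖ * (((μ01 N).toReal - (μ01 P).toReal)/2) ^ (1/q.toReal) := hxnorm
        _ ≤ st ^ (1/p) + 2 * ‖T‖ * (Real.sqrt st / 2) ^ (1/p) :=
            add_le_add hTb (mul_le_mul_of_nonneg_left hcb' (by linarith))
end

section
/- For every p with 2 ≤ p < ∞ there exists a bounded linear operator T : L_p → ℓ_2 which is not narrow. -/
open MeasureTheory Set Filter Topology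
open scoped ENNReal NNReal
open RealInnerProductSpace

instance : IsProbabilityMeasure μ01 := ⟨by simp [μ01, Real.volume_Icc]⟩

/-- The indicator of `Ioc (1/(n+2)) (1/(n+1))` as an element of `L²[0,1]`. -/
noncomputable def indLp (n : ℕ) : Lp ℝ 2 μ01 :=
  indicatorConstLp 2 (measurableSet_Ioc :
    MeasurableSet (Set.Ioc (1/(n+2) : ℝ) (1/(n+1)))) (measure_ne_top μ01 _) (1:ℝ)

lemma μ01_Ioc (n : ℕ) : μ01 (Set.Ioc (1/(n+2) : ℝ) (1/(n+1))) ≠ 0 := by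
  have hsub : Set.Ioc (1/(n+2) : ℝ) (1/(n+1)) ⊆ Set.Icc 0 1 := by
    intro x hx
    constructor
    · exact le_of_lt (lt_of_le_of_lt (by positivity) hx.1)
    · refine hx.2.trans ?_
      rw [div_le_one (by positivity)]
      linarith
  rw [μ01, Measure.restrict_apply measurableSet_Ioc, Set.inter_eq_self_of_subset_left hsub,
    Real.volume_Ioc]
  have : (1/(n+2) : ℝ) < 1/(n+1) := by
    apply div_lt_div_of_pos_left one_pos (by positivity) (by linarith)
  simp only [ne_eq, ENNReal.ofReal_eq_zero, not_le]
  linarith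

lemma indLp_ne_zero (n : ℕ) : indLp n ≠ 0 := by
  intro h
  have := norm_indicatorConstLp (μ := μ01) (s := Set.Ioc (1/(n+2) : ℝ) (1/(n+1)))
    (c := (1:ℝ)) (hs := measurableSet_Ioc) (hμs := measure_ne_top μ01 _)
    (two_ne_zero) (by norm_num)
  rw [show indicatorConstLp 2 measurableSet_Ioc (measure_ne_top μ01 _) (1:ℝ) = indLp n from rfl,
    h] at this
  simp only [norm_zero, norm_one, one_mul] at this
  have h0 := μ01_Ioc n
  have : (μ01 (Set.Ioc (1/(n+2) : ℝ) (1/(n+1)))).toReal = 0 := by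
    have h2 : (0:ℝ) < (2:ℝ≥0∞).toReal⁻¹ := by norm_num
    nlinarith [Real.rpow_natCast ((μ01 (Set.Ioc (1/(n+2) : ℝ) (1/(n+1)))).toReal) 0,
      Real.rpow_eq_zero_iff_of_nonneg (ENNReal.toReal_nonneg
        (a := μ01 (Set.Ioc (1/(n+2) : ℝ) (1/(n+1))))) |>.mp this.symm]
  exact h0 (by
    have := ENNReal.toReal_eq_zero_iff _ |>.mp this
    rcases this with h | h
    · exact h
    · exact absurd h (measure_ne_top μ01 _))

lemma Ioc_disj {i j : ℕ} (hij : i ≠ j) :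
    Disjoint (Set.Ioc (1/(i+2) : ℝ) (1/(i+1))) (Set.Ioc (1/(j+2) : ℝ) (1/(j+1))) := by
  rw [Set.Ioc_disjoint_Ioc]
  rcases hij.lt_or_gt with h | h
  · refine le_trans (min_le_right _ _) (le_trans ?_ (le_max_left _ _))
    have : (i:ℝ) + 1 ≤ j := by exact_mod_cast h
    apply div_le_div_of_nonneg_left one_pos.le (by positivity)
    linarith
  · refine le_trans (min_le_left _ _) (le_trans ?_ (le_max_right _ _))
    have : (j:ℝ) + 1 ≤ i := by exact_mod_cast h
    apply div_le_div_of_nonneg_left one_pos.le (by positivity)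
    linarith

lemma inner_indLp {i j : ℕ} (hij : i ≠ j) : ⟪indLp i, indLp j⟫ = 0 := by
  rw [indLp, MeasureTheory.L2.inner_indicatorConstLp_eq_setIntegral_inner]
  have hz : ∀ᵐ t ∂μ01, t ∈ Set.Ioc (1/(i+2) : ℝ) (1/(i+1)) → ⟪(1:ℝ), (indLp j) t⟫ = 0 := by
    filter_upwards [indicatorConstLp_coeFn_notMem (p := 2) (μ := μ01)
      (hs := (measurableSet_Ioc : MeasurableSet (Set.Ioc (1/(j+2) : ℝ) (1/(j+1)))))
      (hμs := measure_ne_top μ01 _) (c := (1:ℝ))] with t ht hti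
    have : t ∉ Set.Ioc (1/(j+2) : ℝ) (1/(j+1)) :=
      fun h => (Ioc_disj hij).ne_of_mem hti h rfl
    rw [show (indLp j) t = 0 from ht this]
    simp
  calc (∫ t in Set.Ioc (1/(i+2) : ℝ) (1/(i+1)), ⟪(1:ℝ), (indLp j) t⟫ ∂μ01)
      = ∫ t in Set.Ioc (1/(i+2) : ℝ) (1/(i+1)), (0:ℝ) ∂μ01 :=
        setIntegral_congr_ae measurableSet_Ioc (by filter_upwards [hz] with t h1 h2 using h1 h2)
    _ = 0 := by simp

lemma indLp_li : LinearIndependent ℝ indLp :=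
  linearIndependent_of_ne_zero_of_inner_eq_zero indLp_ne_zero fun _ _ h => inner_indLp h

/-- `L²[0,1]` is isometrically isomorphic to `ℓ²`. -/
lemma exists_iso : Nonempty ((Lp ℝ 2 μ01) ≃ₗᵢ[ℝ] lp (fun _ : ℕ => ℝ) 2) := by
  haveI : Fact ((2:ℝ≥0∞) ≠ ∞) := ⟨by norm_num⟩
  obtain ⟨w, b, hb⟩ := exists_hilbertBasis ℝ (Lp ℝ 2 μ01)
  have horth : Orthonormal ℝ (Subtype.val : w → Lp ℝ 2 μ01) := hb ▸ b.orthonormal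
  have hdist : ∀ a c : w, a ≠ c → 1 < dist (a:Lp ℝ 2 μ01) (c:Lp ℝ 2 μ01) := by
    intro a c hac
    have h1 : ‖(a : Lp ℝ 2 μ01)‖ = 1 := horth.1 a
    have h2 : ‖(c : Lp ℝ 2 μ01)‖ = 1 := horth.1 c
    have h3 : ⟪(a : Lp ℝ 2 μ01), (c : Lp ℝ 2 μ01)⟫ = 0 := horth.2 hac
    have h4 : ‖(a:Lp ℝ 2 μ01) - c‖ ^ 2 = 2 := by
      rw [norm_sub_sq_real, h1, h2, h3]; ring
    rw [dist_eq_norm]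
    nlinarith [norm_nonneg ((a:Lp ℝ 2 μ01) - c)]
  haveI : DiscreteTopology w := by
    rw [discreteTopology_iff_isOpen_singleton]
    rintro ⟨x, hx⟩
    have : {(⟨x, hx⟩ : w)} = (Subtype.val) ⁻¹' (Metric.ball x 1) := by
      ext ⟨y, hy⟩
      simp only [Set.mem_singleton_iff, Set.mem_preimage, Metric.mem_ball, Subtype.mk_eq_mk]
      constructor
      · rintro rfl; simp
      · intro h
        by_contra hne
        exact absurd h (not_lt.mpr (le_of_lt (hdist ⟨y, hy⟩ ⟨x, hx⟩ (by simpa using hne))))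
    rw [this]
    exact isOpen_induced (Metric.isOpen_ball)
  haveI : Countable w := (TopologicalSpace.separableSpace_iff_countable).mp inferInstance
  haveI : Infinite w := by
    rw [Set.infinite_coe_iff]
    intro hfin
    have hsp : Submodule.span ℝ (Set.range ⇑b) = ⊤ := by
      have hcl : IsClosed ((Submodule.span ℝ (Set.range ⇑b)) : Set (Lp ℝ 2 μ01)) := by
        haveI : FiniteDimensional ℝ (Submodule.span ℝ (Set.range ⇑b)) :=
          FiniteDimensional.span_of_finite ℝ (by rw [hb]; simpa using hfin)
        exact Submodule.closed_of_finiteDimensional _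
      have := b.dense_span
      rwa [hcl.submodule_topologicalClosure_eq] at this
    haveI : Module.Finite ℝ (Lp ℝ 2 μ01) :=
      ⟨by rw [← hsp]; exact Submodule.fg_span (by rw [hb]; simpa using hfin)⟩
    exact Module.Finite.not_linearIndependent_of_infinite indLp indLp_li
  haveI : Denumerable w := (nonempty_denumerable w).some
  set e : w ≃ ℕ := Denumerable.eqv w
  set v : ℕ → Lp ℝ 2 μ01 := fun n => b (e.symm n) with hv
  have hvon : Orthonormal ℝ v := b.orthonormal.comp _ e.symm.injective
  have hsp : ⊤ ≤ (Submodule.span ℝ (Set.range v)).topologicalClosure := by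
    have : Set.range v = Set.range ⇑b := by
      rw [hv, show (fun n => ⇑b (e.symm n)) = ⇑b ∘ ⇑e.symm from rfl, Set.range_comp,
        Set.range_eq_univ.mpr e.symm.surjective, Set.image_univ]
    rw [this, b.dense_span]
  exact ⟨(HilbertBasis.mk hvon hsp).repr⟩

/-- The inclusion `L_p[0,1] → L_2[0,1]` as a linear map, for `2 ≤ p`. -/
noncomputable def inclL2' (p : ℝ≥0∞) [Fact (1 ≤ p)] (hp2 : 2 ≤ p) : Lp ℝ p μ01 →ₗ[ℝ] Lp ℝ 2 μ01 where
  toFun := fun x => ((Lp.memLp x).mono_exponent hp2).toLp x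
  map_add' := fun x y => by
    rw [← MemLp.toLp_add]
    exact MemLp.toLp_congr _ _ (Lp.coeFn_add x y)
  map_smul' := fun c x => by
    simp only [RingHom.id_apply]
    rw [← MemLp.toLp_const_smul]
    exact MemLp.toLp_congr _ _ (Lp.coeFn_smul c x)

lemma norm_inclL2'_le (p : ℝ≥0∞) [Fact (1 ≤ p)] (hp2 : 2 ≤ p) (x : Lp ℝ p μ01) :
    ‖inclL2' p hp2 x‖ ≤ ‖x‖ := by
  haveI : Fact ((1:ℝ≥0∞) ≤ 2) := ⟨one_le_two⟩
  rw [show inclL2' p hp2 x = ((Lp.memLp x).mono_exponent hp2).toLp x from rfl,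
    Lp.norm_toLp, Lp.norm_def]
  exact ENNReal.toReal_mono (Lp.eLpNorm_ne_top x)
    (eLpNorm_le_eLpNorm_of_exponent_le hp2 (Lp.aestronglyMeasurable x))

/-- The inclusion `L_p[0,1] → L_2[0,1]` as a continuous linear map, for `2 ≤ p`. -/
noncomputable def inclL2 (p : ℝ≥0∞) [Fact (1 ≤ p)] (hp2 : 2 ≤ p) : Lp ℝ p μ01 →L[ℝ] Lp ℝ 2 μ01 :=
  LinearMap.mkContinuous (inclL2' p hp2) 1
    (fun x => by rw [one_mul]; exact norm_inclL2'_le p hp2 x)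

lemma norm_inclL2_sign (p : ℝ≥0∞) [Fact (1 ≤ p)] (hp2 : 2 ≤ p) (x : Lp ℝ p μ01)
    (hx : ∀ᵐ t ∂μ01, x t = 1 ∨ x t = -1) :
    ‖inclL2 p hp2 x‖ = 1 := by
  haveI : Fact ((1:ℝ≥0∞) ≤ 2) := ⟨one_le_two⟩
  rw [show inclL2 p hp2 x = ((Lp.memLp x).mono_exponent hp2).toLp x from rfl,
    Lp.norm_toLp]
  have h1 : eLpNorm (⇑x) 2 μ01 = eLpNorm (fun _ : ℝ => (1:ℝ)) 2 μ01 := by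
    apply eLpNorm_congr_norm_ae
    filter_upwards [hx] with t ht
    rcases ht with h | h <;> simp [h]
  rw [h1, eLpNorm_const (1:ℝ) two_ne_zero (IsProbabilityMeasure.ne_zero μ01)]
  simp

/-- For every `2 ≤ p < ∞` there exists a bounded linear operator
`T : L_p[0,1] → ℓ₂` which is not narrow. -/
theorem exists_non_narrow_Lp_to_l2 (p : ℝ≥0∞) [Fact (1 ≤ p)] (hp2 : 2 ≤ p) (hp : p ≠ ∞) :
    ∃ T : Lp ℝ p μ01 →L[ℝ] lp (fun _ : ℕ => ℝ) 2, ¬ IsNarrow T := by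
  obtain ⟨iso⟩ := exists_iso
  refine ⟨(iso.toLinearIsometry.toContinuousLinearMap).comp (inclL2 p hp2), ?_⟩
  intro hN
  obtain ⟨x, hsign, -, hlt⟩ := hN (Set.Icc 0 1) le_rfl measurableSet_Icc 1 one_pos
  have hmem : ∀ᵐ t ∂μ01, t ∈ Set.Icc (0:ℝ) 1 := ae_restrict_mem measurableSet_Icc
  have hx : ∀ᵐ t ∂μ01, x t = 1 ∨ x t = -1 := by
    filter_upwards [hsign, hmem] with t h1 h2 using h1.1 h2
  have hnorm : ‖(iso.toLinearIsometry.toContinuousLinearMap).comp (inclL2 p hp2) x‖ = 1 := by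
    rw [ContinuousLinearMap.comp_apply, LinearIsometry.coe_toContinuousLinearMap,
      iso.toLinearIsometry.norm_map]
    exact norm_inclL2_sign p hp2 x hx
  rw [hnorm] at hlt
  exact lt_irrefl 1 hlt
end

section
/- Assume 1 < p ≤ 2, a > 0 and b is a real number with |b| ≤ a. Then (a+b)^p − p·a^{p−1}·b ≥ a^p + (p(p−1)/2^{3−p})·b²/a^{2−p}. -/
open Real Set

-- endpoint inequality: for 0 ≤ q ≤ 1, 1 + q * 2^(q-1) ≤ 2^q
lemma endpoint_ineq {q : ℝ} (hq0 : 0 ≤ q) (hq1 : q ≤ 1) :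
    1 + q * 2 ^ (q - 1) ≤ (2:ℝ) ^ q := by
  have hexp : Real.exp (q * (-Real.log 2) + (1 - q) * 0) ≤
      q * Real.exp (-Real.log 2) + (1 - q) * Real.exp 0 :=
    convexOn_exp.2 (mem_univ _) (mem_univ _) hq0 (by linarith) (by ring)
  have h2 : Real.exp (-Real.log 2) = 1/2 := by
    rw [Real.exp_neg, Real.exp_log (by norm_num : (0:ℝ) < 2)]; norm_num
  have hneg : (2:ℝ) ^ (-q) = Real.exp (q * (-Real.log 2)) := by
    rw [Real.rpow_def_of_pos (by norm_num)]; ring_nf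
  have key : (2:ℝ) ^ (-q) ≤ 1 - q/2 := by
    rw [hneg]
    calc Real.exp (q * (-Real.log 2)) = Real.exp (q * (-Real.log 2) + (1-q)*0) := by ring_nf
    _ ≤ q * Real.exp (-Real.log 2) + (1 - q) * Real.exp 0 := hexp
    _ = 1 - q/2 := by rw [h2, Real.exp_zero]; ring
  have hpos : (0:ℝ) < 2 ^ q := Real.rpow_pos_of_pos (by norm_num) q
  have hinv : (2:ℝ) ^ (-q) = ((2:ℝ) ^ q)⁻¹ := by
    rw [Real.rpow_neg (by norm_num)]
  have hK : (2:ℝ) ^ (q - 1) = (2:ℝ) ^ q / 2 := by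
    rw [Real.rpow_sub (by norm_num), Real.rpow_one]
  rw [hK]
  rw [hinv] at key
  have := (inv_le_iff_one_le_mul₀ hpos).mp key
  nlinarith

lemma key_ineq {p : ℝ} (hp1 : 1 < p) (hp2 : p ≤ 2) {t : ℝ} (ht : t ∈ Icc (-1:ℝ) 1) :
    1 + p * t + p * (p-1) * 2 ^ (p-3) * t^2 ≤ (1+t) ^ p := by
  set q : ℝ := p - 1 with hq
  have hq0 : 0 < q := by simp [hq]; linarith
  have hq1 : q ≤ 1 := by simp [hq]; linarith
  set K : ℝ := 2 ^ (q - 1) with hKdef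
  have hKpos : 0 < K := Real.rpow_pos_of_pos (by norm_num) _
  have hK1 : K ≤ 1 := Real.rpow_le_one_of_one_le_of_nonpos (by norm_num) (by linarith)
  set c : ℝ := p * q * K / 2 with hcdef
  have hK2 : K = 2 ^ (p-3) * 2 := by
    rw [hKdef, show q - 1 = (p-3)+1 by rw [hq]; ring,
      Real.rpow_add_one (by norm_num : (2:ℝ) ≠ 0)]
  have hcoef : p * (p-1) * 2 ^ (p-3) = c := by
    rw [hcdef, hK2, hq]; ring
  rw [hcoef]
  clear_value q K c
  set φ : ℝ → ℝ := fun t => (1+t) ^ p - p * t - c * t^2 with hφdef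
  have hderiv : ∀ x : ℝ, HasDerivAt φ (p * (1+x) ^ q - p - 2 * c * x) x := by
    intro x
    have h1 : HasDerivAt (fun t : ℝ => (1+t) ^ p) (p * (1+x) ^ q) x := by
      have hb : HasDerivAt (fun t : ℝ => 1 + t) 1 x := (hasDerivAt_id x).const_add 1
      have := ((Real.hasStrictDerivAt_rpow_const (x := 1+x) (p := p)
        (Or.inr hp1.le)).hasDerivAt).comp x hb
      rw [hq, ← mul_one (p * (1 + x) ^ (p - 1))]; exact this
    have h2 : HasDerivAt (fun t : ℝ => p * t) p x := by
      simpa using (hasDerivAt_id x).const_mul p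
    have h3 : HasDerivAt (fun t : ℝ => c * t^2) (c * (2 * x)) x := by
      simpa using (hasDerivAt_pow 2 x).const_mul c
    have := (h1.sub h2).sub h3
    exact this.congr_deriv (by ring)
  -- derivative sign on [0,1]
  have hA : ∀ x ∈ Icc (0:ℝ) 1, 0 ≤ p * (1+x) ^ q - p - 2 * c * x := by
    intro x hx
    obtain ⟨hx0, hx1⟩ := hx
    have hconc := (Real.concaveOn_rpow hq0.le hq1).2 (Set.mem_Ici.mpr (by norm_num : (0:ℝ) ≤ 1))
      (Set.mem_Ici.mpr (by norm_num : (0:ℝ) ≤ 2)) (by linarith : 0 ≤ 1 - x) hx0 (by ring)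
    simp only [smul_eq_mul, Real.one_rpow] at hconc
    have hconc' : 1 + x * ((2:ℝ) ^ q - 1) ≤ (1+x) ^ q := by
      calc 1 + x * ((2:ℝ) ^ q - 1) = (1-x) * 1 + x * (2:ℝ) ^ q := by ring
      _ ≤ ((1-x) * 1 + x * 2) ^ q := hconc
      _ = (1+x) ^ q := by ring_nf
    have hend : 1 + q * K ≤ (2:ℝ) ^ q := hKdef ▸ endpoint_ineq hq0.le hq1
    have : 1 + q * K * x ≤ (1+x) ^ q := by nlinarith
    have hp0 : 0 < p := by linarith
    rw [hcdef]
    have h5 := mul_le_mul_of_nonneg_left this hp0.le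
    have h6 : p * (1 + q * K * x) = p + 2 * (p * q * K / 2) * x := by ring
    linarith [h6 ▸ h5]
  -- derivative sign on [-1,0]
  have hB : ∀ x ∈ Icc (-1:ℝ) 0, p * (1+x) ^ q - p - 2 * c * x ≤ 0 := by
    intro x hx
    obtain ⟨hx0, hx1⟩ := hx
    have hbern : (1+x) ^ q ≤ 1 + q * x :=
      rpow_one_add_le_one_add_mul_self hx0 hq0.le hq1
    have : q * x ≤ q * K * x := by
      nlinarith [mul_nonneg (mul_nonneg hq0.le (neg_nonneg.mpr hx1)) (sub_nonneg.mpr hK1)]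
    have hp0 : 0 < p := by linarith
    rw [hcdef]
    have h5 := mul_le_mul_of_nonneg_left hbern hp0.le
    have h6 := mul_le_mul_of_nonneg_left this hp0.le
    have h7 : p * (q * K * x) = 2 * (p * q * K / 2) * x := by ring
    have h8 : p * (1 + q * x) = p + p * (q * x) := by ring
    linarith [h7 ▸ h6, h8 ▸ h5]
  have hcont : ∀ s : Set ℝ, ContinuousOn φ s := fun s x _ =>
    (hderiv x).continuousAt.continuousWithinAt
  have hdiff : ∀ s : Set ℝ, DifferentiableOn ℝ φ s := fun s x _ =>
    (hderiv x).differentiableAt.differentiableWithinAt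
  have hφ0 : φ 0 = 1 := by simp [hφdef]
  have main : 1 ≤ φ t := by
    rcases le_or_gt t 0 with h | h
    · have hanti : AntitoneOn φ (Icc (-1) 0) := by
        apply antitoneOn_of_deriv_nonpos (convex_Icc _ _) (hcont _) (hdiff _)
        intro x hx
        rw [interior_Icc] at hx
        rw [(hderiv x).deriv]
        exact hB x ⟨hx.1.le, hx.2.le⟩
      have := hanti ⟨ht.1, h⟩ ⟨by norm_num, le_refl 0⟩ h
      rw [hφ0] at this; exact this
    · have hmono : MonotoneOn φ (Icc 0 1) := by
        apply monotoneOn_of_deriv_nonneg (convex_Icc _ _) (hcont _) (hdiff _)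
        intro x hx
        rw [interior_Icc] at hx
        rw [(hderiv x).deriv]
        exact hA x ⟨hx.1.le, hx.2.le⟩
      have := hmono ⟨le_refl 0, by norm_num⟩ ⟨h.le, ht.2⟩ h.le
      rw [hφ0] at this; exact this
  have : φ t = (1+t) ^ p - p * t - c * t^2 := rfl
  linarith [main, this ▸ main]

/-- If `1 < p ≤ 2`, `a > 0` and `|b| ≤ a`, then
`(a+b)^p - p a^{p-1} b ≥ a^p + (p(p-1)/2^{3-p}) b² / a^{2-p}`. -/
theorem pointwise_power_inequality (p a b : ℝ) (hp1 : 1 < p) (hp2 : p ≤ 2)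
    (ha : 0 < a) (hb : |b| ≤ a) :
    (a + b) ^ p - p * a ^ (p - 1) * b
      ≥ a ^ p + (p * (p - 1) / 2 ^ (3 - p)) * (b ^ 2 / a ^ (2 - p)) := by
  obtain ⟨hb1, hb2⟩ := abs_le.mp hb
  have ha' : a ≠ 0 := ha.ne'
  set t : ℝ := b / a with htdef
  have ht : t ∈ Set.Icc (-1:ℝ) 1 := by
    constructor
    · rw [htdef]; rw [neg_le, ← neg_div]; exact (div_le_one ha).mpr (by linarith)
    · rw [htdef]; exact (div_le_one ha).mpr hb2
  have hkey := key_ineq hp1 hp2 ht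
  have hap : (0:ℝ) < a ^ p := Real.rpow_pos_of_pos ha p
  have H := mul_le_mul_of_nonneg_left hkey hap.le
  -- identities
  have e1 : a ^ (p-1) * a = a ^ p := by
    rw [← Real.rpow_add_one ha' (p-1)]; norm_num
  have f1 : a ^ (p-1) = a ^ (p-2) * a := by
    rw [← Real.rpow_add_one ha' (p-2)]; congr 1; ring
  have f2 : a ^ p = a ^ (p-2) * a ^ (2:ℕ) := by
    rw [show a ^ (2:ℕ) = a * a by ring, ← mul_assoc, ← Real.rpow_add_one ha' (p-2),
      ← Real.rpow_add_one ha' (p-2+1)]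
    congr 1; ring
  have e3 : (2:ℝ) ^ (3-p) = ((2:ℝ) ^ (p-3))⁻¹ := by
    rw [← Real.rpow_neg (by norm_num : (0:ℝ) ≤ 2)]; norm_num
  have e4 : a ^ (2-p) = (a ^ (p-2))⁻¹ := by
    rw [← Real.rpow_neg ha.le]; norm_num
  have h2pos : (0:ℝ) < 2 ^ (p-3) := Real.rpow_pos_of_pos (by norm_num) _
  have hap2 : (0:ℝ) < a ^ (p-2) := Real.rpow_pos_of_pos ha _
  -- LHS of H equals (a+b)^p
  have hL : a ^ p * (1 + t) ^ p = (a + b) ^ p := by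
    rw [← Real.mul_rpow ha.le (by linarith [ht.1] : (0:ℝ) ≤ 1 + t)]
    congr 1
    rw [htdef]; field_simp
  -- RHS of H expansion
  have hR : a ^ p * (1 + p * t + p * (p-1) * 2 ^ (p-3) * t^2)
      = a ^ p + p * a ^ (p-1) * b + p * (p-1) * 2 ^ (p-3) * (b^2 * a ^ (p-2)) := by
    rw [htdef, f2, f1]
    field_simp
  -- coefficient rewriting in the goal
  have hC : (p * (p - 1) / 2 ^ (3 - p)) * (b ^ 2 / a ^ (2 - p))
      = p * (p-1) * 2 ^ (p-3) * (b^2 * a ^ (p-2)) := by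
    rw [e3, e4]
    field_simp
  rw [ge_iff_le, hC]
  rw [hL, hR] at H
  linarith
end

section
/- Assume 1 < p ≤ 2, A ⊆ [0,1] is measurable, a is a nonzero real number, and y is an essentially bounded measurable function on [0,1] vanishing a.e. outside A, with |y(t)| ≤ |a| for a.e. t ∈ A and ∫_{[0,1]} y dμ = 0. Then ∫_{[0,1]} |a·1_A + y|^p dμ ≥ |a|^p·μ(A) + (p(p−1)/2^{3−p})·‖y‖_2²/|a|^{2−p}, where ‖y‖_2² = ∫_{[0,1]} y² dμ. -/
open MeasureTheory Set Filter Topology Real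
open scoped ENNReal NNReal

/-- Generic: derivative nonneg on an interval gives endpoint inequality. -/
lemma aux_le_of_deriv {x y : ℝ} (hxy : x ≤ y) (f f' : ℝ → ℝ)
    (hd : ∀ t ∈ Set.Icc x y, HasDerivAt f (f' t) t)
    (hn : ∀ t ∈ Set.Icc x y, 0 ≤ f' t) : f x ≤ f y := by
  have hmono : MonotoneOn f (Set.Icc x y) :=
    monotoneOn_of_hasDerivWithinAt_nonneg (convex_Icc x y)
      (fun t ht => (hd t ht).continuousAt.continuousWithinAt)
      (fun t ht => ((hd t (interior_subset ht)).hasDerivWithinAt))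
      (fun t ht => hn t (interior_subset ht))
  exact hmono (Set.left_mem_Icc.2 hxy) (Set.right_mem_Icc.2 hxy) hxy

/-- The inner function `φ(t) = (1+t)^(p-1) - 1 - (p-1)·2^(p-2)·t`. -/
noncomputable def φfun (p t : ℝ) : ℝ := (1 + t) ^ (p - 1) - 1 - (p - 1) * 2 ^ (p - 2) * t

lemma φ_hasDeriv (p : ℝ) {t : ℝ} (ht : -1 < t) :
    HasDerivAt (φfun p) ((p - 1) * ((1 + t) ^ (p - 2) - 2 ^ (p - 2))) t := by
  have h1t : (1 : ℝ) + t ≠ 0 := by linarith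
  have h1 : HasDerivAt (fun s : ℝ => (1 + s) ^ (p - 1))
      ((p - 1) * (1 + t) ^ (p - 1 - 1) * 1) t := by
    have hin : HasDerivAt (fun s : ℝ => 1 + s) 1 t := by
      simpa using (hasDerivAt_id t).const_add (1:ℝ)
    exact (Real.hasDerivAt_rpow_const (Or.inl h1t)).comp t hin
  have h2 : HasDerivAt (fun s : ℝ => (1 : ℝ) + (p - 1) * 2 ^ (p - 2) * s)
      ((p - 1) * 2 ^ (p - 2)) t := by
    simpa using ((hasDerivAt_id t).const_mul ((p - 1) * 2 ^ (p - 2))).const_add (1:ℝ)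
  have := h1.sub h2
  have heq : p - 1 - 1 = p - 2 := by ring
  convert this using 1
  · rfl
  · rfl
  · funext s; simp [φfun]; ring
  · rw [heq]; ring

/-- φ(p,·) ≥ 0 on [0,1]. -/
lemma φ_nonneg (p : ℝ) (hp1 : 1 < p) (hp2 : p ≤ 2) {t : ℝ} (ht0 : 0 ≤ t) (ht1 : t ≤ 1) :
    0 ≤ φfun p t := by
  have h0 : φfun p 0 = 0 := by simp [φfun]
  rw [← h0]
  refine aux_le_of_deriv ht0 (φfun p) (fun s => (p - 1) * ((1 + s) ^ (p - 2) - 2 ^ (p - 2)))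
    (fun s hs => φ_hasDeriv p (by linarith [hs.1])) (fun s hs => ?_)
  have hsle : (1 : ℝ) + s ≤ 2 := by linarith [hs.2, ht1]
  have hspos : (0 : ℝ) < 1 + s := by linarith [hs.1]
  have h2 : (2 : ℝ) ^ (p - 2) ≤ (1 + s) ^ (p - 2) :=
    Real.rpow_le_rpow_of_nonpos hspos hsle (by linarith)
  exact mul_nonneg (by linarith) (by linarith)

/-- φ(p,·) ≤ 0 on (-1,0]. -/
lemma φ_nonpos (p : ℝ) (hp1 : 1 < p) (hp2 : p ≤ 2) {t : ℝ} (ht0 : -1 < t) (ht1 : t ≤ 0) :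
    φfun p t ≤ 0 := by
  have h0 : φfun p 0 = 0 := by simp [φfun]
  rw [← h0]
  refine aux_le_of_deriv ht1 (φfun p) (fun s => (p - 1) * ((1 + s) ^ (p - 2) - 2 ^ (p - 2)))
    (fun s hs => φ_hasDeriv p (by linarith [hs.1])) (fun s hs => ?_)
  have hsle : (1 : ℝ) + s ≤ 2 := by linarith [hs.2]
  have hspos : (0 : ℝ) < 1 + s := by linarith [hs.1]
  have h2 : (2 : ℝ) ^ (p - 2) ≤ (1 + s) ^ (p - 2) :=
    Real.rpow_le_rpow_of_nonpos hspos hsle (by linarith)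
  exact mul_nonneg (by linarith) (by linarith)

/-- `h(t) = (1+t)^p - 1 - p t - K t^2` with `K = p(p-1)/2^(3-p)`. -/
noncomputable def hfun (p t : ℝ) : ℝ :=
  (1 + t) ^ p - 1 - p * t - (p * (p - 1) / 2 ^ (3 - p)) * t ^ 2

lemma two_rpow_identity (p : ℝ) : 2 * (p * (p - 1) / 2 ^ (3 - p)) = p * (p - 1) * 2 ^ (p - 2) := by
  have h2 : (0:ℝ) < 2 ^ (3 - p) := Real.rpow_pos_of_pos (by norm_num) _
  have key : (2:ℝ) ^ (p - 2) * 2 ^ (3 - p) = 2 := by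
    rw [← Real.rpow_add (by norm_num : (0:ℝ) < 2)]
    norm_num
  field_simp
  rw [mul_assoc (p * (p - 1)), mul_comm ((2:ℝ) ^ (3 - p)), key]
  ring

lemma h_hasDeriv (p : ℝ) {t : ℝ} (ht : -1 < t) :
    HasDerivAt (hfun p) (p * φfun p t) t := by
  have h1t : (1 : ℝ) + t ≠ 0 := by linarith
  have hin : HasDerivAt (fun s : ℝ => 1 + s) 1 t := by
    simpa using (hasDerivAt_id t).const_add (1:ℝ)
  have h1 : HasDerivAt (fun s : ℝ => (1 + s) ^ p) (p * (1 + t) ^ (p - 1)) t := by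
    have := (Real.hasDerivAt_rpow_const (p := p) (Or.inl h1t)).comp t hin; rw [mul_one] at this; exact this
  have h2 : HasDerivAt (fun s : ℝ => 1 + p * s + (p * (p - 1) / 2 ^ (3 - p)) * s ^ 2)
      (p + (p * (p - 1) / 2 ^ (3 - p)) * (2 * t)) t := by
    have ha : HasDerivAt (fun s : ℝ => p * s) p t := by
      simpa using (hasDerivAt_id t).const_mul p
    have hb : HasDerivAt (fun s : ℝ => s ^ 2) (2 * t) t := by
      simpa using hasDerivAt_pow 2 t
    exact ((ha.const_add (1:ℝ)).add (hb.const_mul (p * (p - 1) / 2 ^ (3 - p))))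
  have := h1.sub h2
  have hK := two_rpow_identity p
  convert this using 1
  · rfl
  · rfl
  · funext s; simp [hfun]; ring
  · simp only [φfun]; nlinarith [hK]

lemma h_nonneg (p : ℝ) (hp1 : 1 < p) (hp2 : p ≤ 2) {t : ℝ} (ht0 : -1 ≤ t) (ht1 : t ≤ 1) :
    0 ≤ hfun p t := by
  have hKle : p * (p - 1) / 2 ^ (3 - p) ≤ p - 1 := by
    have h2 : (2:ℝ) ^ (1:ℝ) ≤ 2 ^ (3 - p) :=
      Real.rpow_le_rpow_of_exponent_le (by norm_num) (by linarith)
    rw [Real.rpow_one] at h2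
    rw [div_le_iff₀ (by linarith)]
    nlinarith
  rcases eq_or_lt_of_le ht0 with h | h
  · -- t = -1
    have : hfun p (-1) = p - 1 - p * (p - 1) / 2 ^ (3 - p) := by
      simp [hfun, Real.zero_rpow (by linarith : p ≠ 0)]
      ring
    rw [← h]
    rw [this]; linarith
  rcases le_or_gt t 0 with h0 | h0
  · -- t ∈ (-1, 0]
    have key : (fun s => - hfun p s) t ≤ (fun s => - hfun p s) 0 := by
      refine aux_le_of_deriv h0 (fun s => - hfun p s) (fun s => -(p * φfun p s)) (fun s hs => ?_) (fun s hs => ?_)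
      · exact (h_hasDeriv p (by linarith [hs.1])).neg
      · have := φ_nonpos p hp1 hp2 (by linarith [hs.1] : -1 < s) hs.2
        simp only [neg_nonneg]
        exact mul_nonpos_of_nonneg_of_nonpos (by linarith) this
    have h00 : hfun p 0 = 0 := by simp [hfun]
    simp only [h00, neg_zero] at key
    linarith
  · -- t ∈ (0, 1]
    have key : hfun p 0 ≤ hfun p t := by
      refine aux_le_of_deriv (le_of_lt h0) _ (fun s => p * φfun p s) (fun s hs => ?_)
        (fun s hs => ?_)
      · exact h_hasDeriv p (by linarith [hs.1])
      · exact mul_nonneg (by linarith) (φ_nonneg p hp1 hp2 hs.1 (by linarith [hs.2]))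
    have h00 : hfun p 0 = 0 := by simp [hfun]
    linarith [key]

lemma key_pos (p : ℝ) (hp1 : 1 < p) (hp2 : p ≤ 2) {a u : ℝ} (ha : 0 < a) (hu : |u| ≤ a) :
    a ^ p + (p * a ^ (p - 1)) * u + (p * (p - 1) / 2 ^ (3 - p)) * (u ^ 2 / a ^ (2 - p))
      ≤ |a + u| ^ p := by
  obtain ⟨hu1, hu2⟩ := abs_le.mp hu
  set t := u / a with htdef
  have ht0 : -1 ≤ t := by
    rw [htdef, le_div_iff₀ ha]; linarith
  have ht1 : t ≤ 1 := (div_le_one ha).mpr hu2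
  have hpos : (0:ℝ) ≤ 1 + t := by linarith
  have habs : |a + u| = a * (1 + t) := by
    rw [abs_of_nonneg (by linarith : (0:ℝ) ≤ a + u), htdef]
    field_simp
  have hmul : |a + u| ^ p = a ^ p * (1 + t) ^ p := by
    rw [habs, Real.mul_rpow ha.le hpos]
  have hh := h_nonneg p hp1 hp2 ht0 ht1
  have hap : 0 < a ^ p := Real.rpow_pos_of_pos ha p
  rw [hmul]
  have expand : a ^ p * (1 + p * t + (p * (p - 1) / 2 ^ (3 - p)) * t ^ 2)
      ≤ a ^ p * (1 + t) ^ p := by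
    have : 1 + p * t + (p * (p - 1) / 2 ^ (3 - p)) * t ^ 2 ≤ (1 + t) ^ p := by
      simp only [hfun] at hh; linarith
    exact mul_le_mul_of_nonneg_left this hap.le
  refine le_trans (le_of_eq ?_) expand
  have e1 : a ^ (p - 1) = a ^ p / a := by rw [Real.rpow_sub ha, Real.rpow_one]
  have e2 : a ^ (2 - p) = a ^ 2 / a ^ p := by
    rw [Real.rpow_sub ha]
    congr 1
    rw [show (2:ℝ) = ((2:ℕ):ℝ) by norm_num, Real.rpow_natCast]
  rw [e1, e2, htdef]
  field_simp

lemma key_any (p : ℝ) (hp1 : 1 < p) (hp2 : p ≤ 2) {a : ℝ} (ha : a ≠ 0) :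
    ∃ c : ℝ, ∀ u : ℝ, |u| ≤ |a| →
      |a| ^ p + c * u + (p * (p - 1) / 2 ^ (3 - p)) * (u ^ 2 / |a| ^ (2 - p))
        ≤ |a + u| ^ p := by
  rcases ha.lt_or_gt with hneg | hpos
  · refine ⟨-(p * (-a) ^ (p - 1)), fun u hu => ?_⟩
    have hA : |a| = -a := abs_of_neg hneg
    have h2 : |(-u)| ≤ -a := by rw [abs_neg]; rw [hA] at hu; exact hu
    have := key_pos p hp1 hp2 (by linarith : (0:ℝ) < -a) h2
    have habs : |(-a) + (-u)| = |a + u| := by rw [← abs_neg]; ring_nf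
    rw [habs] at this
    rw [hA]
    calc (-a) ^ p + -(p * (-a) ^ (p - 1)) * u
          + (p * (p - 1) / 2 ^ (3 - p)) * (u ^ 2 / (-a) ^ (2 - p))
        = (-a) ^ p + (p * (-a) ^ (p - 1)) * (-u)
          + (p * (p - 1) / 2 ^ (3 - p)) * ((-u) ^ 2 / (-a) ^ (2 - p)) := by ring
      _ ≤ |a + u| ^ p := this
  · refine ⟨p * a ^ (p - 1), fun u hu => ?_⟩
    have hA : |a| = a := abs_of_pos hpos
    rw [hA] at hu ⊢
    exact key_pos p hp1 hp2 hpos hu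

/-- If `1 < p ≤ 2`, `A ⊆ [0,1]` is measurable, `a ≠ 0`, and `y` is a measurable function
vanishing a.e. outside `A` with `|y| ≤ |a|` a.e. on `A` and `∫ y dμ = 0`, then
`∫ |a·1_A + y|^p dμ ≥ |a|^p μ(A) + (p(p-1)/2^{3-p}) ‖y‖₂² / |a|^{2-p}`. -/
theorem integral_power_inequality (p : ℝ) (hp1 : 1 < p) (hp2 : p ≤ 2)
    (A : Set ℝ) (hA : A ⊆ Set.Icc 0 1) (hAm : MeasurableSet A)
    (a : ℝ) (ha : a ≠ 0)
    (y : ℝ → ℝ) (hy : Measurable y)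
    (hy0 : ∀ᵐ t ∂μ01, t ∉ A → y t = 0)
    (hyb : ∀ᵐ t ∂μ01, t ∈ A → |y t| ≤ |a|)
    (hymean : ∫ t, y t ∂μ01 = 0) :
    ∫ t, |a * Set.indicator A (fun _ => (1:ℝ)) t + y t| ^ p ∂μ01
      ≥ |a| ^ p * (μ01 A).toReal
        + (p * (p - 1) / 2 ^ (3 - p)) * ((∫ t, (y t) ^ 2 ∂μ01) / |a| ^ (2 - p)) := by
  haveI : IsFiniteMeasure μ01 := by
    constructor
    simp [μ01, Real.volume_Icc]
  set K := p * (p - 1) / 2 ^ (3 - p) with hK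
  have hD : (0:ℝ) < |a| ^ (2 - p) := Real.rpow_pos_of_pos (abs_pos.mpr ha) _
  set D := |a| ^ (2 - p) with hDdef
  obtain ⟨c, hc⟩ := key_any p hp1 hp2 ha
  -- a.e. bound on |y|
  have hb : ∀ᵐ t ∂μ01, |y t| ≤ |a| := by
    filter_upwards [hy0, hyb] with t h0 h1
    by_cases htA : t ∈ A
    · exact h1 htA
    · rw [h0 htA]; simp [abs_nonneg]
  set f : ℝ → ℝ := fun t => |a * Set.indicator A (fun _ => (1:ℝ)) t + y t| ^ p with hf
  set g : ℝ → ℝ := fun t =>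
    Set.indicator A (fun _ => |a| ^ p) t + c * y t + (K / D) * (y t) ^ 2 with hg
  -- pointwise a.e. inequality
  have hae : ∀ᵐ t ∂μ01, g t ≤ f t := by
    filter_upwards [hy0, hyb] with t h0 h1
    by_cases htA : t ∈ A
    · have h2 := hc (y t) (h1 htA)
      simp only [hf, hg, Set.indicator_of_mem htA]
      calc |a| ^ p + c * y t + K / D * y t ^ 2
          = |a| ^ p + c * y t + K * (y t ^ 2 / D) := by ring
        _ ≤ |a + y t| ^ p := h2
        _ = |a * 1 + y t| ^ p := by norm_num
    · simp only [hf, hg, Set.indicator_of_notMem htA, h0 htA]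
      simp [Real.zero_rpow (by linarith : p ≠ 0)]
  -- integrability
  have hyInt : Integrable y μ01 := by
    refine Integrable.mono' (integrable_const |a|) hy.aestronglyMeasurable ?_
    filter_upwards [hb] with t ht using ht
  have hy2Int : Integrable (fun t => (y t) ^ 2) μ01 := by
    refine Integrable.mono' (integrable_const (|a| ^ 2)) ((hy.pow_const 2).aestronglyMeasurable) ?_
    filter_upwards [hb] with t ht
    rw [Real.norm_eq_abs, abs_pow]
    exact pow_le_pow_left₀ (abs_nonneg _) ht 2
  have hIndInt : Integrable (Set.indicator A fun _ => |a| ^ p) μ01 :=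
    (integrable_const _).indicator hAm
  have hgInt : Integrable g μ01 :=
    (hIndInt.add (hyInt.const_mul c)).add ((hy2Int.const_mul (K / D)))
  have hfm : Measurable f := by
    have h1 : Measurable (fun t => a * Set.indicator A (fun _ => (1:ℝ)) t + y t) :=
      ((measurable_const.indicator hAm).const_mul a).add hy
    exact (Real.continuous_rpow_const (by linarith : (0:ℝ) ≤ p)).measurable.comp h1.abs
  have hfInt : Integrable f μ01 := by
    refine Integrable.mono' (integrable_const ((2 * |a|) ^ p)) hfm.aestronglyMeasurable ?_
    filter_upwards [hb] with t ht
    have hbase : |a * Set.indicator A (fun _ => (1:ℝ)) t + y t| ≤ 2 * |a| := by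
      calc |a * Set.indicator A (fun _ => (1:ℝ)) t + y t|
          ≤ |a * Set.indicator A (fun _ => (1:ℝ)) t| + |y t| := abs_add_le _ _
        _ ≤ |a| + |a| := by
            refine add_le_add ?_ ht
            rw [abs_mul]
            by_cases htA : t ∈ A <;>
              simp [Set.indicator_of_mem, Set.indicator_of_notMem, htA, abs_nonneg]
        _ = 2 * |a| := by ring
    rw [Real.norm_eq_abs, abs_of_nonneg (Real.rpow_nonneg (abs_nonneg _) p)]
    exact Real.rpow_le_rpow (abs_nonneg _) hbase (by linarith)
  -- compute ∫ g
  have hIndVal : ∫ t, Set.indicator A (fun _ => |a| ^ p) t ∂μ01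
      = (μ01 A).toReal * (|a| ^ p) := by
    rw [integral_indicator_const _ hAm]
    simp [smul_eq_mul, measureReal_def]
  have hgVal : ∫ t, g t ∂μ01
      = (μ01 A).toReal * (|a| ^ p) + (K / D) * (∫ t, (y t) ^ 2 ∂μ01) := by
    have h12 : Integrable (fun t => Set.indicator A (fun _ => |a| ^ p) t + c * y t) μ01 :=
      hIndInt.add (hyInt.const_mul c)
    have h3 : Integrable (fun t => (K / D) * (y t) ^ 2) μ01 := hy2Int.const_mul (K / D)
    have hcy : Integrable (fun t => c * y t) μ01 := hyInt.const_mul c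
    simp only [hg]
    rw [integral_add h12 h3, integral_add hIndInt hcy, integral_const_mul, integral_const_mul,
      hymean, hIndVal]
    ring
  have hmono := integral_mono_ae hgInt hfInt hae
  rw [hgVal] at hmono
  have : K / D * (∫ t, (y t) ^ 2 ∂μ01) = K * ((∫ t, (y t) ^ 2 ∂μ01) / D) := by ring
  rw [this] at hmono
  calc |a| ^ p * (μ01 A).toReal + K * ((∫ t, (y t) ^ 2 ∂μ01) / D)
      = (μ01 A).toReal * (|a| ^ p) + K * ((∫ t, (y t) ^ 2 ∂μ01) / D) := by ring
    _ ≤ ∫ t, f t ∂μ01 := hmono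
end
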